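/- arXiv:2209.01584 — 4 statements merged into one kernel-verified Lean document; each statement's English description precedes it below -/
import Mathlib

section
/- There is a constant C* ≥ 1 such that the following holds. Let n, m, k, r be integers with n/2 ≥ m ≥ k ≥ 1 and r ≥ 2. Then there exist an integer n' with n/2 < n' ≤ n and an (ε,δ,m)-balanced coloring γ : C([n'],k) → [r], where ε = 4r²k·exp(−√m/(16k)) + r·(3C*·(log(n+r))²/m^{1/4})^k and δ = 4r·exp(−√m/8). -/
open Finset

/-- The coloring `γ` of the `k`-element subsets of `{1,…,n'}` with `r` colors is
`ε`-balanced on `A`. -/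
def EpsBalancedOn {n k r : ℕ} (γ : {S : Finset (Fin n) // S.card = k} → Fin r) (ε : ℝ)
    (A : Finset (Fin n)) : Prop :=
  ∀ i : Fin r,
    ((1 - ε) / r) * (A.card.choose k : ℝ) ≤
      (Nat.card {S : {S : Finset (Fin n) // S.card = k} // γ S = i ∧ S.1 ⊆ A} : ℝ) ∧
    (Nat.card {S : {S : Finset (Fin n) // S.card = k} // γ S = i ∧ S.1 ⊆ A} : ℝ) ≤
      ((1 + ε) / r) * (A.card.choose k : ℝ)

/-- `γ` is `(ε,δ,m)`-balanced. -/
def IsBalancedColoring {n k r : ℕ} (m : ℕ) (ε δ : ℝ)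
    (γ : {S : Finset (Fin n) // S.card = k} → Fin r) : Prop :=
  ∀ ℓ : ℕ, m ≤ ℓ → ℓ ≤ n →
    (1 - δ) * (n.choose ℓ : ℝ) ≤
      (Nat.card {A : Finset (Fin n) // A.card = ℓ ∧ EpsBalancedOn γ ε A} : ℝ)

lemma mul_le_pow_self {x : ℝ} (hx : 2 ≤ x) {k : ℕ} (hk : 1 ≤ k) : (k:ℝ) * x ≤ x ^ k := by
  obtain ⟨j, rfl⟩ : ∃ j, k = j + 1 := ⟨k - 1, by omega⟩
  have hx0 : (0:ℝ) ≤ x := by linarith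
  have h2j : ((j:ℝ) + 1) ≤ 2 ^ j := by
    have := Nat.lt_two_pow_self (n := j)
    have h1 : (j + 1 : ℕ) ≤ 2 ^ j := this
    exact_mod_cast h1
  calc ((j + 1 : ℕ):ℝ) * x ≤ (2:ℝ) ^ j * x := by
        apply mul_le_mul_of_nonneg_right _ hx0
        push_cast
        linarith
    _ ≤ x ^ j * x := by
        apply mul_le_mul_of_nonneg_right (pow_le_pow_left₀ (by norm_num) hx j) hx0
    _ = x ^ (j + 1) := by ring

lemma sum_pow_count {K : Type*} [Fintype K] [DecidableEq K] {r : ℕ} (i : Fin r) (𝒜 : Finset K) (z : ℝ) :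
    ∑ γ : K → Fin r, z ^ (𝒜.filter fun S => γ S = i).card
      = (z + (r - 1)) ^ 𝒜.card * (r : ℝ) ^ (Fintype.card K - 𝒜.card) := by
  classical
  have h1 : ∀ γ : K → Fin r, z ^ (𝒜.filter fun S => γ S = i).card
      = ∏ S : K, (if S ∈ 𝒜 ∧ γ S = i then z else 1) := by
    intro γ
    rw [Finset.prod_ite, Finset.prod_const, Finset.prod_const, one_pow, mul_one]
    congr 2
    ext S; simp [and_comm]
  simp_rw [h1]
  have hswap := Finset.prod_univ_sum (fun _ : K => (univ : Finset (Fin r)))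
    (fun S c => if S ∈ 𝒜 ∧ c = i then z else 1)
  rw [Fintype.piFinset_univ] at hswap
  rw [← hswap]
  have h2 : ∀ S : K, (∑ c : Fin r, if S ∈ 𝒜 ∧ c = i then z else 1)
      = if S ∈ 𝒜 then z + ((r:ℝ)-1) else (r:ℝ) := by
    intro S
    by_cases hS : S ∈ 𝒜 <;> simp [hS]
    have : ∀ c : Fin r, (if c = i then z else 1) = (if c = i then z - 1 else 0) + 1 := by
      intro c; by_cases h : c = i <;> simp [h]
    simp_rw [this]
    rw [Finset.sum_add_distrib, Finset.sum_ite_eq' Finset.univ i (fun _ => z - 1)]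
    simp [Finset.card_univ]
    ring
  simp_rw [h2]
  rw [Finset.prod_ite, Finset.prod_const, Finset.prod_const]
  congr 2
  · simp
  · rw [← Finset.card_univ]
    rw [Finset.filter_not, Finset.card_sdiff_of_subset (Finset.filter_subset _ _)]
    congr 1
    simp

/-- Generic Chernoff-type tail bound on the number of colorings whose count on `𝒜`
    is in the tail described by `p`. -/
lemma tail_bound {K : Type*} [Fintype K] [DecidableEq K] {r : ℕ} (hr : 1 ≤ r) (i : Fin r)
    (𝒜 : Finset K) {z : ℝ} (hz : 0 < z) (a : ℝ)
    (p : (K → Fin r) → Prop) [DecidablePred p]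
    (hp : ∀ γ, p γ → z ^ (a : ℝ) ≤ z ^ (((𝒜.filter fun S => γ S = i).card : ℝ))) :
    ((univ.filter p).card : ℝ) ≤
      Real.exp ((𝒜.card : ℝ) * (z - 1) / r - a * Real.log z) * (r : ℝ) ^ (Fintype.card K) := by
  classical
  have hrpos : (0:ℝ) < r := by exact_mod_cast hr
  have hza : (0:ℝ) < z ^ (a:ℝ) := Real.rpow_pos_of_pos hz a
  have key : ((univ.filter p).card : ℝ) * z ^ (a:ℝ) ≤ ∑ γ : K → Fin r, z ^ (𝒜.filter fun S => γ S = i).card := by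
    calc ((univ.filter p).card : ℝ) * z ^ (a:ℝ)
        = ∑ _γ ∈ univ.filter p, z ^ (a:ℝ) := by rw [Finset.sum_const, nsmul_eq_mul]
      _ ≤ ∑ γ ∈ univ.filter p, z ^ (((𝒜.filter fun S => γ S = i).card : ℕ)) := by
          apply Finset.sum_le_sum
          intro γ hγ
          have := hp γ (Finset.mem_filter.mp hγ).2
          rwa [Real.rpow_natCast] at this
      _ ≤ ∑ γ : K → Fin r, z ^ (𝒜.filter fun S => γ S = i).card := by
          apply Finset.sum_le_sum_of_subset_of_nonneg (Finset.filter_subset _ _)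
          intro γ _ _; positivity
  rw [sum_pow_count] at key
  have hN : 𝒜.card ≤ Fintype.card K := by
    rw [← Finset.card_univ]; exact Finset.card_le_card (Finset.subset_univ _)
  have hbase : z + ((r:ℝ) - 1) ≤ r * Real.exp ((z-1)/r) := by
    have h1 : 1 + (z-1)/r ≤ Real.exp ((z-1)/r) := by
      have := Real.add_one_le_exp ((z-1)/r); linarith
    calc z + ((r:ℝ) - 1) = r * (1 + (z-1)/r) := by field_simp; ring
      _ ≤ r * Real.exp ((z-1)/r) := by
          apply mul_le_mul_of_nonneg_left h1 (le_of_lt hrpos)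
  have hpow : (z + ((r:ℝ) - 1)) ^ 𝒜.card ≤ (r:ℝ) ^ 𝒜.card * Real.exp ((𝒜.card : ℝ) * (z - 1) / r) := by
    calc (z + ((r:ℝ) - 1)) ^ 𝒜.card ≤ ((r:ℝ) * Real.exp ((z-1)/r)) ^ 𝒜.card := by
          apply pow_le_pow_left₀ _ hbase
          have : (1:ℝ) ≤ r := by exact_mod_cast hr
          nlinarith [hz]
      _ = (r:ℝ) ^ 𝒜.card * Real.exp ((𝒜.card : ℝ) * (z - 1) / r) := by
          rw [mul_pow, ← Real.exp_nat_mul]; ring_nf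
  have key2 : ((univ.filter p).card : ℝ) * z ^ (a:ℝ) ≤
      Real.exp ((𝒜.card : ℝ) * (z - 1) / r) * (r : ℝ) ^ (Fintype.card K) := by
    calc ((univ.filter p).card : ℝ) * z ^ (a:ℝ)
        ≤ (z + ((r:ℝ) - 1)) ^ 𝒜.card * (r : ℝ) ^ (Fintype.card K - 𝒜.card) := key
      _ ≤ ((r:ℝ) ^ 𝒜.card * Real.exp ((𝒜.card : ℝ) * (z - 1) / r)) * (r : ℝ) ^ (Fintype.card K - 𝒜.card) := by
          apply mul_le_mul_of_nonneg_right hpow (by positivity)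
      _ = Real.exp ((𝒜.card : ℝ) * (z - 1) / r) * ((r:ℝ) ^ 𝒜.card * (r : ℝ) ^ (Fintype.card K - 𝒜.card)) := by ring
      _ = Real.exp ((𝒜.card : ℝ) * (z - 1) / r) * (r : ℝ) ^ (Fintype.card K) := by
          rw [← pow_add, Nat.add_sub_cancel' hN]
  have hzae : z ^ (a:ℝ) = Real.exp (a * Real.log z) := by
    rw [Real.rpow_def_of_pos hz]; ring_nf
  calc ((univ.filter p).card : ℝ)
      = ((univ.filter p).card : ℝ) * z ^ (a:ℝ) / z ^ (a:ℝ) := by field_simp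
    _ ≤ (Real.exp ((𝒜.card : ℝ) * (z - 1) / r) * (r : ℝ) ^ (Fintype.card K)) / z ^ (a:ℝ) := by
        exact div_le_div_of_nonneg_right key2 hza.le |>.trans_eq rfl
    _ = Real.exp ((𝒜.card : ℝ) * (z - 1) / r - a * Real.log z) * (r : ℝ) ^ (Fintype.card K) := by
        rw [hzae, Real.exp_sub]; ring

lemma card_subs {n k : ℕ} (A : Finset (Fin n)) :
    ((univ.filter fun S : {S : Finset (Fin n) // S.card = k} => S.1 ⊆ A).card) = A.card.choose k := by
  classical
  rw [← Finset.card_powersetCard k A]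
  apply Finset.card_bij (fun S _ => S.1)
  · intro S hS
    rw [Finset.mem_powersetCard]
    exact ⟨(Finset.mem_filter.mp hS).2, S.2⟩
  · intro S _ T _ h; exact Subtype.ext h
  · intro B hB
    rw [Finset.mem_powersetCard] at hB
    exact ⟨⟨B, hB.2⟩, by simp [hB.1], rfl⟩

lemma natcard_eq {n k r : ℕ} (γ : {S : Finset (Fin n) // S.card = k} → Fin r) (i : Fin r)
    (A : Finset (Fin n)) :
    (Nat.card {S : {S : Finset (Fin n) // S.card = k} // γ S = i ∧ S.1 ⊆ A}) =
      (((univ.filter fun S : {S : Finset (Fin n) // S.card = k} => S.1 ⊆ A).filter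
        fun S => γ S = i).card) := by
  classical
  rw [Nat.card_eq_fintype_card, Fintype.card_subtype]
  congr 1
  ext S; simp [and_comm]

lemma card_setsize {n ℓ : ℕ} :
    ((univ : Finset (Finset (Fin n))).filter fun A => A.card = ℓ).card = n.choose ℓ := by
  classical
  have : ((univ : Finset (Finset (Fin n))).filter fun A => A.card = ℓ) = Finset.powersetCard ℓ univ := by
    ext A; simp [Finset.mem_powersetCard]
  rw [this, Finset.card_powersetCard]
  simp

lemma pow_div_le_choose : ∀ (k m : ℕ), k ≤ m → ((m:ℝ)/k)^k ≤ (m.choose k : ℝ)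
  | 0, m, _ => by simp
  | (k+1), m, h => by
    push_cast
    have hm1 : 1 ≤ m := le_trans (Nat.succ_le_succ (Nat.zero_le k)) h
    have hrec := pow_div_le_choose k (m-1) (by omega)
    have hid : (m.choose (k+1) : ℝ) * (k+1) = m * ((m-1).choose k) := by
      have := Nat.add_one_mul_choose_eq (m-1) k
      rw [Nat.sub_add_cancel hm1] at this
      exact_mod_cast congrArg (Nat.cast (R := ℝ)) this.symm
    have hk1 : (0:ℝ) < (k+1 : ℝ) := by positivity
    have hmono : ((m:ℝ)/(k+1)) ≤ ((m-1:ℕ):ℝ)/k ∨ k = 0 := by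
      rcases Nat.eq_zero_or_pos k with hk | hk
      · right; exact hk
      · left
        rw [div_le_div_iff₀ hk1 (by exact_mod_cast hk)]
        have : ((m-1:ℕ):ℝ) = (m:ℝ) - 1 := by
          rw [Nat.cast_sub hm1]; simp
        rw [this]
        have hkm : (k:ℝ) + 1 ≤ (m:ℝ) := by exact_mod_cast h
        nlinarith
    have key : ((m:ℝ)/(k+1))^(k+1) ≤ (m:ℝ)/(k+1) * ((m-1:ℕ).choose k) := by
      rcases hmono with hm | hk0
      · have h1 : ((m:ℝ)/(k+1))^k ≤ (((m-1:ℕ):ℝ)/k)^k :=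
          pow_le_pow_left₀ (by positivity) hm k
        calc ((m:ℝ)/(k+1))^(k+1) = (m:ℝ)/(k+1) * ((m:ℝ)/(k+1))^k := by ring
          _ ≤ (m:ℝ)/(k+1) * (((m-1:ℕ):ℝ)/k)^k := by
              apply mul_le_mul_of_nonneg_left h1 (by positivity)
          _ ≤ (m:ℝ)/(k+1) * ((m-1:ℕ).choose k) := by
              apply mul_le_mul_of_nonneg_left hrec (by positivity)
      · subst hk0; simp
    calc ((m:ℝ)/(k+1))^(k+1) ≤ (m:ℝ)/(k+1) * ((m-1:ℕ).choose k) := key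
      _ = (m * ((m-1:ℕ).choose k)) / (k+1) := by ring
      _ = (m.choose (k+1) : ℝ) := by rw [← hid]; field_simp

lemma exp_neg_le_quad {x : ℝ} (hx : 0 ≤ x) : Real.exp (-x) ≤ 1 - x + x^2 := by
  have h1 : x + 1 ≤ Real.exp x := Real.add_one_le_exp x
  have h2 : Real.exp (-x) * Real.exp x = 1 := by
    rw [← Real.exp_add]; simp
  have h3 : (0:ℝ) < Real.exp (-x) := Real.exp_pos _
  have h4 : Real.exp (-x) * (x+1) ≤ 1 := by
    calc Real.exp (-x) * (x+1) ≤ Real.exp (-x) * Real.exp x :=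
          mul_le_mul_of_nonneg_left h1 h3.le
      _ = 1 := h2
  nlinarith [pow_nonneg hx 3]

lemma exp_le_quad {x : ℝ} (hx : 0 ≤ x) (hx2 : x ≤ 1/2) : Real.exp x ≤ 1 + x + 2*x^2 := by
  have h1 : -x + 1 ≤ Real.exp (-x) := Real.add_one_le_exp (-x)
  have h2 : Real.exp x * Real.exp (-x) = 1 := by rw [← Real.exp_add]; simp
  have h3 : (0:ℝ) < Real.exp x := Real.exp_pos _
  have h4 : Real.exp x * (1-x) ≤ 1 := by
    calc Real.exp x * (1-x) ≤ Real.exp x * Real.exp (-x) := by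
          apply mul_le_mul_of_nonneg_left (by linarith) h3.le
      _ = 1 := h2
  nlinarith [sq_nonneg x, pow_nonneg hx 3]

lemma branchB_bound {n k r : ℕ} (hr : 1 ≤ r) {ε ε₁ : ℝ} (hε₁0 : 0 ≤ ε₁) (hε₁1 : ε₁ ≤ 1)
    (hε₁ε : ε₁ ≤ ε) (A : Finset (Fin n))
    (inst : DecidablePred fun γ : {S : Finset (Fin n) // S.card = k} → Fin r =>
      ¬ EpsBalancedOn γ ε A) :
    ((univ.filter fun γ : {S : Finset (Fin n) // S.card = k} → Fin r =>
        ¬ EpsBalancedOn γ ε A).card : ℝ)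
      ≤ 2 * r * Real.exp (-(ε₁^2 * (A.card.choose k) / (8*r)))
          * (r:ℝ)^(Fintype.card {S : Finset (Fin n) // S.card = k}) := by
  classical
  set K := {S : Finset (Fin n) // S.card = k} with hK
  set 𝒜 : Finset K := univ.filter fun S : K => S.1 ⊆ A with h𝒜
  have hrR : (1:ℝ) ≤ (r:ℝ) := by exact_mod_cast hr
  have hrpos : (0:ℝ) < r := by linarith
  set N : ℝ := (A.card.choose k : ℝ) with hNdef
  have hN : (𝒜.card : ℝ) = N := by rw [h𝒜, card_subs]
  have hN0 : 0 ≤ N := Nat.cast_nonneg _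
  have hε0 : 0 ≤ ε := le_trans hε₁0 hε₁ε
  set cnt : (K → Fin r) → Fin r → ℕ := fun γ i => (𝒜.filter fun S => γ S = i).card with hcnt
  set low : Fin r → Finset (K → Fin r) := fun i =>
    univ.filter fun γ => ((cnt γ i : ℝ) ≤ (1-ε)/r * N) with hlow
  set up : Fin r → Finset (K → Fin r) := fun i =>
    univ.filter fun γ => ((1+ε₁)/r * N ≤ (cnt γ i : ℝ)) with hup
  have hsub : univ.filter (fun γ : K → Fin r => ¬ EpsBalancedOn γ ε A) ⊆
      Finset.univ.biUnion (fun i : Fin r => low i ∪ up i) := by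
    intro γ hγ
    rw [Finset.mem_filter] at hγ
    have hγ2 := hγ.2
    rw [EpsBalancedOn] at hγ2
    push_neg at hγ2
    obtain ⟨i, hi⟩ := hγ2
    rw [Finset.mem_biUnion]
    refine ⟨i, Finset.mem_univ i, ?_⟩
    by_cases hcase : ((1 - ε) / r) * N ≤ (Nat.card {S : K // γ S = i ∧ S.1 ⊆ A} : ℝ)
    · -- then the upper bound must fail
      have h2 := hi hcase
      apply Finset.mem_union_right
      rw [hup, Finset.mem_filter]
      refine ⟨Finset.mem_univ _, ?_⟩
      have hle : (1+ε₁)/r * N ≤ (1+ε)/r * N := by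
        apply mul_le_mul_of_nonneg_right _ hN0
        exact div_le_div_of_nonneg_right (by linarith) hrpos.le
      have : (cnt γ i : ℝ) = (Nat.card {S : K // γ S = i ∧ S.1 ⊆ A} : ℝ) := by
        rw [natcard_eq]
      rw [this]
      linarith
    · push_neg at hcase
      apply Finset.mem_union_left
      rw [hlow, Finset.mem_filter]
      refine ⟨Finset.mem_univ _, ?_⟩
      have : (cnt γ i : ℝ) = (Nat.card {S : K // γ S = i ∧ S.1 ⊆ A} : ℝ) := by
        rw [natcard_eq]
      rw [this]
      linarith
  have hE : (0:ℝ) ≤ Real.exp (-(ε₁^2 * N / (8*r))) * (r:ℝ)^(Fintype.card K) := by positivity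
  -- lower tail bound
  have hlowb : ∀ i : Fin r, ((low i).card : ℝ)
      ≤ Real.exp (-(ε₁^2 * N / (8*r))) * (r:ℝ)^(Fintype.card K) := by
    intro i
    have hz : (0:ℝ) < Real.exp (-(ε/2)) := Real.exp_pos _
    have hz1 : Real.exp (-(ε/2)) ≤ 1 := by
      rw [Real.exp_le_one_iff]; linarith
    have htb := tail_bound (K := K) hr i 𝒜 hz ((1-ε)/r * N)
      (fun γ => ((cnt γ i : ℝ) ≤ (1-ε)/r * N))
      (by
        intro γ hγ
        exact Real.rpow_le_rpow_of_exponent_ge hz hz1 hγ)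
    calc ((low i).card : ℝ) ≤ Real.exp ((𝒜.card : ℝ) * (Real.exp (-(ε/2)) - 1) / r
          - ((1-ε)/r * N) * Real.log (Real.exp (-(ε/2)))) * (r:ℝ)^(Fintype.card K) := htb
      _ ≤ Real.exp (-(ε₁^2 * N / (8*r))) * (r:ℝ)^(Fintype.card K) := by
          apply mul_le_mul_of_nonneg_right _ (by positivity)
          rw [Real.exp_le_exp, Real.log_exp, hN]
          have hq := exp_neg_le_quad (by linarith : (0:ℝ) ≤ ε/2)
          have hee : ε₁^2 ≤ ε^2 := by nlinarith
          have heq : (N * (Real.exp (-(ε/2)) - 1) / r - ((1-ε)/r*N) * (-(ε/2)))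
              = (N * (Real.exp (-(ε/2)) - 1) + (1-ε)*N*(ε/2)) / r := by
            field_simp; ring
          rw [heq]
          have hnum : N * (Real.exp (-(ε/2)) - 1) + (1-ε)*N*(ε/2) ≤ -(ε₁^2*N/8) := by
            nlinarith [mul_le_mul_of_nonneg_left hq hN0]
          calc (N * (Real.exp (-(ε/2)) - 1) + (1-ε)*N*(ε/2)) / r
              ≤ (-(ε₁^2*N/8)) / r := div_le_div_of_nonneg_right hnum hrpos.le
            _ = -(ε₁^2 * N / (8*r)) := by field_simp
  -- upper tail bound
  have hupb : ∀ i : Fin r, ((up i).card : ℝ)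
      ≤ Real.exp (-(ε₁^2 * N / (8*r))) * (r:ℝ)^(Fintype.card K) := by
    intro i
    have hz : (0:ℝ) < Real.exp (ε₁/4) := Real.exp_pos _
    have hz1 : (1:ℝ) ≤ Real.exp (ε₁/4) := by
      rw [Real.one_le_exp_iff]; linarith
    have htb := tail_bound (K := K) hr i 𝒜 hz ((1+ε₁)/r * N)
      (fun γ => ((1+ε₁)/r * N ≤ (cnt γ i : ℝ)))
      (by
        intro γ hγ
        exact Real.rpow_le_rpow_of_exponent_le hz1 hγ)
    calc ((up i).card : ℝ) ≤ Real.exp ((𝒜.card : ℝ) * (Real.exp (ε₁/4) - 1) / r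
          - ((1+ε₁)/r * N) * Real.log (Real.exp (ε₁/4))) * (r:ℝ)^(Fintype.card K) := htb
      _ ≤ Real.exp (-(ε₁^2 * N / (8*r))) * (r:ℝ)^(Fintype.card K) := by
          apply mul_le_mul_of_nonneg_right _ (by positivity)
          rw [Real.exp_le_exp, Real.log_exp, hN]
          have hq := exp_le_quad (by linarith : (0:ℝ) ≤ ε₁/4) (by linarith : ε₁/4 ≤ 1/2)
          have heq : (N * (Real.exp (ε₁/4) - 1) / r - ((1+ε₁)/r*N) * (ε₁/4))
              = (N * (Real.exp (ε₁/4) - 1) - (1+ε₁)*N*(ε₁/4)) / r := by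
            field_simp
          rw [heq]
          have hnum : N * (Real.exp (ε₁/4) - 1) - (1+ε₁)*N*(ε₁/4) ≤ -(ε₁^2*N/8) := by
            nlinarith [mul_le_mul_of_nonneg_left hq hN0]
          calc (N * (Real.exp (ε₁/4) - 1) - (1+ε₁)*N*(ε₁/4)) / r
              ≤ (-(ε₁^2*N/8)) / r := div_le_div_of_nonneg_right hnum hrpos.le
            _ = -(ε₁^2 * N / (8*r)) := by field_simp
  calc ((univ.filter fun γ : K → Fin r => ¬ EpsBalancedOn γ ε A).card : ℝ)
      ≤ ((Finset.univ.biUnion (fun i : Fin r => low i ∪ up i)).card : ℝ) := by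
        exact_mod_cast Finset.card_le_card hsub
    _ ≤ ∑ i : Fin r, (((low i ∪ up i).card : ℕ) : ℝ) := by
        exact_mod_cast Finset.card_biUnion_le
    _ ≤ ∑ i : Fin r, (((low i).card : ℝ) + ((up i).card : ℝ)) := by
        apply Finset.sum_le_sum
        intro i _
        exact_mod_cast Finset.card_union_le _ _
    _ ≤ ∑ _i : Fin r, (2 * Real.exp (-(ε₁^2 * N / (8*r))) * (r:ℝ)^(Fintype.card K)) := by
        apply Finset.sum_le_sum
        intro i _
        have := hlowb i
        have := hupb i
        linarith
    _ = 2 * r * Real.exp (-(ε₁^2 * N / (8*r))) * (r:ℝ)^(Fintype.card K) := by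
        rw [Finset.sum_const, nsmul_eq_mul]
        simp [Finset.card_univ]
        ring

lemma branchA_bound {n k r : ℕ} (hr : 1 ≤ r) {ε τ : ℝ} (hτ : 0 ≤ τ) (hε7 : 7 ≤ ε)
    (hrτ : (r:ℝ)*τ ≤ ε) (A : Finset (Fin n))
    (inst : DecidablePred fun γ : {S : Finset (Fin n) // S.card = k} → Fin r =>
      ¬ EpsBalancedOn γ ε A) :
    ((univ.filter fun γ : {S : Finset (Fin n) // S.card = k} → Fin r =>
        ¬ EpsBalancedOn γ ε A).card : ℝ)
      ≤ (r:ℝ) * Real.exp (-(τ * (A.card.choose k)))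
          * (r:ℝ)^(Fintype.card {S : Finset (Fin n) // S.card = k}) := by
  classical
  set K := {S : Finset (Fin n) // S.card = k} with hK
  set 𝒜 : Finset K := univ.filter fun S : K => S.1 ⊆ A with h𝒜
  have hrR : (1:ℝ) ≤ (r:ℝ) := by exact_mod_cast hr
  have hrpos : (0:ℝ) < r := by linarith
  set N : ℝ := (A.card.choose k : ℝ) with hNdef
  have hN : (𝒜.card : ℝ) = N := by rw [h𝒜, card_subs]
  have hN0 : 0 ≤ N := Nat.cast_nonneg _
  set cnt : (K → Fin r) → Fin r → ℕ := fun γ i => (𝒜.filter fun S => γ S = i).card with hcnt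
  set up : Fin r → Finset (K → Fin r) := fun i =>
    univ.filter fun γ => ((1+ε)/r * N ≤ (cnt γ i : ℝ)) with hup
  have hsub : univ.filter (fun γ : K → Fin r => ¬ EpsBalancedOn γ ε A) ⊆
      Finset.univ.biUnion (fun i : Fin r => up i) := by
    intro γ hγ
    rw [Finset.mem_filter] at hγ
    have hγ2 := hγ.2
    rw [EpsBalancedOn] at hγ2
    push_neg at hγ2
    obtain ⟨i, hi⟩ := hγ2
    rw [Finset.mem_biUnion]
    refine ⟨i, Finset.mem_univ i, ?_⟩
    have hlow0 : ((1 - ε) / r) * N ≤ (Nat.card {S : K // γ S = i ∧ S.1 ⊆ A} : ℝ) := by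
      have h1 : ((1 - ε) / r) ≤ 0 := by
        apply div_nonpos_of_nonpos_of_nonneg (by linarith) hrpos.le
      have h2 : ((1 - ε) / r) * N ≤ 0 := mul_nonpos_of_nonpos_of_nonneg h1 hN0
      exact le_trans h2 (Nat.cast_nonneg _)
    have h2 := hi hlow0
    rw [hup, Finset.mem_filter]
    refine ⟨Finset.mem_univ _, ?_⟩
    have : (cnt γ i : ℝ) = (Nat.card {S : K // γ S = i ∧ S.1 ⊆ A} : ℝ) := by
      rw [natcard_eq]
    rw [this]
    linarith
  have hupb : ∀ i : Fin r, ((up i).card : ℝ)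
      ≤ Real.exp (-(τ * N)) * (r:ℝ)^(Fintype.card K) := by
    intro i
    have hz : (0:ℝ) < Real.exp 2 := Real.exp_pos _
    have hz1 : (1:ℝ) ≤ Real.exp 2 := by rw [Real.one_le_exp_iff]; norm_num
    have htb := tail_bound (K := K) hr i 𝒜 hz ((1+ε)/r * N)
      (fun γ => ((1+ε)/r * N ≤ (cnt γ i : ℝ)))
      (by
        intro γ hγ
        exact Real.rpow_le_rpow_of_exponent_le hz1 hγ)
    calc ((up i).card : ℝ) ≤ Real.exp ((𝒜.card : ℝ) * (Real.exp 2 - 1) / r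
          - ((1+ε)/r * N) * Real.log (Real.exp 2)) * (r:ℝ)^(Fintype.card K) := htb
      _ ≤ Real.exp (-(τ * N)) * (r:ℝ)^(Fintype.card K) := by
          apply mul_le_mul_of_nonneg_right _ (by positivity)
          rw [Real.exp_le_exp, Real.log_exp, hN]
          have he2 : Real.exp 2 ≤ 7.4 := by
            have h1 : Real.exp 1 < 2.7182818286 := Real.exp_one_lt_d9
            have h2 : Real.exp 2 = Real.exp 1 * Real.exp 1 := by
              rw [← Real.exp_add]; norm_num
            nlinarith [Real.exp_pos 1]
          have heq : (N * (Real.exp 2 - 1) / r - ((1+ε)/r*N) * 2)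
              = (N * (Real.exp 2 - 1) - (1+ε)*N*2) / r := by
            field_simp
            try ring
          rw [heq]
          have hnum : N * (Real.exp 2 - 1) - (1+ε)*N*2 ≤ -(τ*N) * r := by
            have hτε : (r:ℝ)*τ*N ≤ ε*N := mul_le_mul_of_nonneg_right hrτ hN0
            nlinarith [mul_le_mul_of_nonneg_left he2 hN0]
          calc (N * (Real.exp 2 - 1) - (1+ε)*N*2) / r
              ≤ (-(τ*N) * r) / r := div_le_div_of_nonneg_right hnum hrpos.le
            _ = -(τ * N) := by field_simp
  calc ((univ.filter fun γ : K → Fin r => ¬ EpsBalancedOn γ ε A).card : ℝ)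
      ≤ ((Finset.univ.biUnion (fun i : Fin r => up i)).card : ℝ) := by
        exact_mod_cast Finset.card_le_card hsub
    _ ≤ ∑ i : Fin r, (((up i).card : ℕ) : ℝ) := by
        exact_mod_cast Finset.card_biUnion_le
    _ ≤ ∑ _i : Fin r, (Real.exp (-(τ * N)) * (r:ℝ)^(Fintype.card K)) := by
        apply Finset.sum_le_sum
        intro i _
        exact hupb i
    _ = (r:ℝ) * Real.exp (-(τ * N)) * (r:ℝ)^(Fintype.card K) := by
        rw [Finset.sum_const, nsmul_eq_mul]
        simp [Finset.card_univ]
        ring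

lemma balanced_of_eps_big {n k r m : ℕ} (hr : 1 ≤ r) {ε δ : ℝ} (hδ : 0 ≤ δ)
    (hε : (r:ℝ) ≤ ε) (γ : {S : Finset (Fin n) // S.card = k} → Fin r) :
    IsBalancedColoring m ε δ γ := by
  classical
  intro ℓ hm hn
  have hrR : (1:ℝ) ≤ (r:ℝ) := by exact_mod_cast hr
  have hrpos : (0:ℝ) < r := by linarith
  have hbal : ∀ A : Finset (Fin n), EpsBalancedOn γ ε A := by
    intro A i
    constructor
    · have h1 : (1-ε)/(r:ℝ) ≤ 0 :=
        div_nonpos_of_nonpos_of_nonneg (by linarith) hrpos.le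
      exact le_trans (mul_nonpos_of_nonpos_of_nonneg h1 (Nat.cast_nonneg _)) (Nat.cast_nonneg _)
    · have hle : (Nat.card {S : {S : Finset (Fin n) // S.card = k} // γ S = i ∧ S.1 ⊆ A} : ℝ)
          ≤ (A.card.choose k : ℝ) := by
        rw [natcard_eq, ← card_subs (k := k) A]
        exact_mod_cast Finset.card_le_card (Finset.filter_subset _ _)
      calc (Nat.card {S : {S : Finset (Fin n) // S.card = k} // γ S = i ∧ S.1 ⊆ A} : ℝ)
          ≤ (A.card.choose k : ℝ) := hle
        _ = 1 * (A.card.choose k : ℝ) := by ring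
        _ ≤ ((1 + ε)/r) * (A.card.choose k : ℝ) := by
            apply mul_le_mul_of_nonneg_right _ (Nat.cast_nonneg _)
            rw [le_div_iff₀ hrpos]
            linarith
  have hcard : Nat.card {A : Finset (Fin n) // A.card = ℓ ∧ EpsBalancedOn γ ε A}
      = n.choose ℓ := by
    rw [Nat.card_eq_fintype_card, Fintype.card_subtype, ← card_setsize (n := n) (ℓ := ℓ)]
    congr 1
    ext A
    simp [hbal A]
  rw [hcard]
  have : (0:ℝ) ≤ (n.choose ℓ : ℝ) := Nat.cast_nonneg _
  nlinarith

lemma exists_good_coloring {n k r m : ℕ} (hr : 1 ≤ r) {ε δ E : ℝ} (hδ : 0 ≤ δ) (hE : 0 ≤ E)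
    (hbound : ∀ ℓ, m ≤ ℓ → ℓ ≤ n → ∀ A : Finset (Fin n), A.card = ℓ →
      ∀ (inst : DecidablePred fun γ : {S : Finset (Fin n) // S.card = k} → Fin r =>
          ¬ EpsBalancedOn γ ε A),
      (((univ.filter fun γ : {S : Finset (Fin n) // S.card = k} → Fin r =>
          ¬ EpsBalancedOn γ ε A).card : ℝ))
        ≤ E * (r:ℝ) ^ (Fintype.card {S : Finset (Fin n) // S.card = k}))
    (hsum : ((n:ℝ) + 1) * E ≤ δ) :
    ∃ γ : {S : Finset (Fin n) // S.card = k} → Fin r, IsBalancedColoring m ε δ γ := by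
  classical
  set K := {S : Finset (Fin n) // S.card = k}
  haveI : Nonempty (Fin r) := ⟨⟨0, hr⟩⟩
  set cK := Fintype.card K with hcK
  -- number of A's of size ℓ that are not balanced
  set bad : ℕ → (K → Fin r) → ℕ := fun ℓ γ =>
    (((univ : Finset (Finset (Fin n))).filter fun A => A.card = ℓ).filter
      fun A => ¬ EpsBalancedOn γ ε A).card with hbad
  have stepA : ∀ ℓ ∈ Finset.Icc m n, (∑ γ : K → Fin r, (bad ℓ γ : ℝ))
      ≤ (n.choose ℓ : ℝ) * (E * (r:ℝ)^cK) := by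
    intro ℓ hℓ
    rw [Finset.mem_Icc] at hℓ
    have h1 : ∀ γ : K → Fin r, (bad ℓ γ : ℝ) =
        ∑ A ∈ (univ : Finset (Finset (Fin n))).filter (fun A => A.card = ℓ),
          (if ¬ EpsBalancedOn γ ε A then (1:ℝ) else 0) := by
      intro γ
      rw [hbad]
      push_cast [Finset.card_filter]
      rfl
    simp_rw [h1]
    rw [Finset.sum_comm]
    have h2 : ∀ A ∈ (univ : Finset (Finset (Fin n))).filter (fun A => A.card = ℓ),
        (∑ γ : K → Fin r, if ¬ EpsBalancedOn γ ε A then (1:ℝ) else 0)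
          ≤ E * (r:ℝ)^cK := by
      intro A hA
      rw [Finset.mem_filter] at hA
      have := hbound ℓ hℓ.1 hℓ.2 A hA.2 inferInstance
      calc (∑ γ : K → Fin r, if ¬ EpsBalancedOn γ ε A then (1:ℝ) else 0)
          = (((univ.filter fun γ : K → Fin r => ¬ EpsBalancedOn γ ε A).card : ℝ)) := by
            rw [Finset.card_filter]; push_cast; rfl
        _ ≤ E * (r:ℝ)^cK := this
    calc _ ≤ ∑ _A ∈ (univ : Finset (Finset (Fin n))).filter (fun A => A.card = ℓ),
          E * (r:ℝ)^cK := Finset.sum_le_sum h2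
      _ = (n.choose ℓ : ℝ) * (E * (r:ℝ)^cK) := by
          rw [Finset.sum_const, card_setsize, nsmul_eq_mul]
  set W : (K → Fin r) → ℝ := fun γ => ∑ ℓ ∈ Finset.Icc m n, (bad ℓ γ : ℝ)/(n.choose ℓ) with hW
  have stepB : ∃ γ : K → Fin r, W γ ≤ δ := by
    have hsumW : ∑ γ : K → Fin r, W γ ≤ ∑ _γ : K → Fin r, δ := by
      rw [hW, Finset.sum_comm]
      calc ∑ ℓ ∈ Finset.Icc m n, ∑ γ : K → Fin r, (bad ℓ γ : ℝ)/(n.choose ℓ)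
          ≤ ∑ ℓ ∈ Finset.Icc m n, E * (r:ℝ)^cK := by
            apply Finset.sum_le_sum
            intro ℓ hℓ
            rw [← Finset.sum_div]
            rw [Finset.mem_Icc] at hℓ
            have hch : (0:ℝ) < (n.choose ℓ : ℝ) := by
              exact_mod_cast Nat.choose_pos hℓ.2
            rw [div_le_iff₀ hch]
            calc ∑ γ : K → Fin r, (bad ℓ γ : ℝ)
                ≤ (n.choose ℓ : ℝ) * (E * (r:ℝ)^cK) := stepA ℓ (Finset.mem_Icc.mpr hℓ)
              _ = E * (r:ℝ)^cK * (n.choose ℓ) := by ring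
        _ = (Finset.Icc m n).card * (E * (r:ℝ)^cK) := by rw [Finset.sum_const, nsmul_eq_mul]
        _ ≤ ((n:ℝ) + 1) * E * (r:ℝ)^cK := by
            have hc : ((Finset.Icc m n).card : ℝ) ≤ (n:ℝ) + 1 := by
              rw [Nat.card_Icc]
              have h9 : n + 1 - m ≤ n + 1 := by omega
              calc ((n+1-m : ℕ):ℝ) ≤ ((n+1 : ℕ):ℝ) := by exact_mod_cast h9
                _ = (n:ℝ)+1 := by push_cast; ring
            have hnn : (0:ℝ) ≤ E * (r:ℝ)^cK := by positivity
            calc ((Finset.Icc m n).card : ℝ) * (E * (r:ℝ)^cK)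
                ≤ ((n:ℝ)+1) * (E * (r:ℝ)^cK) := mul_le_mul_of_nonneg_right hc hnn
              _ = ((n:ℝ)+1) * E * (r:ℝ)^cK := by ring
        _ ≤ δ * (r:ℝ)^cK := by
            apply mul_le_mul_of_nonneg_right hsum (by positivity)
        _ = ∑ _γ : K → Fin r, δ := by
            rw [Finset.sum_const, nsmul_eq_mul, Finset.card_univ, Fintype.card_fun,
              Fintype.card_fin]
            push_cast; ring
    obtain ⟨γ, _, hγ⟩ := Finset.exists_le_of_sum_le Finset.univ_nonempty hsumW
    exact ⟨γ, hγ⟩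
  obtain ⟨γ, hγ⟩ := stepB
  refine ⟨γ, ?_⟩
  intro ℓ hm hn
  have hch : (0:ℝ) < (n.choose ℓ : ℝ) := by exact_mod_cast Nat.choose_pos hn
  have hterm : (bad ℓ γ : ℝ)/(n.choose ℓ) ≤ δ := by
    calc (bad ℓ γ : ℝ)/(n.choose ℓ)
        ≤ W γ := by
          apply Finset.single_le_sum (f := fun ℓ => (bad ℓ γ : ℝ)/(n.choose ℓ)) ?_
            (Finset.mem_Icc.mpr ⟨hm, hn⟩)
          intro j _; positivity
      _ ≤ δ := hγ
  have hbadle : (bad ℓ γ : ℝ) ≤ δ * (n.choose ℓ) := by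
    rw [div_le_iff₀ hch] at hterm; linarith
  -- good count
  have hgood : (Nat.card {A : Finset (Fin n) // A.card = ℓ ∧ EpsBalancedOn γ ε A} : ℝ)
      = (n.choose ℓ : ℝ) - (bad ℓ γ : ℝ) := by
    have e1 : Nat.card {A : Finset (Fin n) // A.card = ℓ ∧ EpsBalancedOn γ ε A}
        = (((univ : Finset (Finset (Fin n))).filter fun A => A.card = ℓ).filter
            fun A => EpsBalancedOn γ ε A).card := by
      rw [Nat.card_eq_fintype_card, Fintype.card_subtype]
      congr 1
      rw [Finset.filter_filter]
    have e2 : (((univ : Finset (Finset (Fin n))).filter fun A => A.card = ℓ).filter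
        fun A => EpsBalancedOn γ ε A).card + bad ℓ γ = n.choose ℓ := by
      rw [hbad, ← card_setsize (n := n) (ℓ := ℓ)]
      exact Finset.card_filter_add_card_filter_not _
    rw [e1]
    have e3 := congrArg (Nat.cast (R := ℝ)) e2
    push_cast at e3
    linarith
  rw [hgood]
  nlinarith

set_option maxHeartbeats 1000000 in
lemma GA_ineq {k : ℕ} (hk : 1 ≤ k) {mR L M t N₀ lognn : ℝ}
    (hkpos : 0 < (k:ℝ)) (hL2 : 2 ≤ L) (hM1 : 1 ≤ M) (h3L2M : 3*L^2 < M)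
    (h32k : 32*(k:ℝ) ≤ M^2) (ht : t = 3*1*L^2/M) (hM4 : M^4 = mR)
    (hN₀ge : (mR/(k:ℝ))^k ≤ N₀) (hlog : lognn ≤ L) (ht0 : 0 ≤ t) :
    M^2/8 + lognn ≤ t^k * N₀ := by
  have hMpos : (0:ℝ) < M := by linarith
  have hMne : M ≠ 0 := by linarith
  have hkne : (k:ℝ) ≠ 0 := by linarith
  have htk0 : (0:ℝ) ≤ t^k := pow_nonneg ht0 k
  have hLsq : (4:ℝ) ≤ L^2 := by nlinarith
  have hLM9 : 9 * L ≤ M^2 := by nlinarith [mul_self_lt_mul_self (by positivity : (0:ℝ) ≤ 3*L^2) h3L2M]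
  set y : ℝ := t * (mR/k) with hy
  clear_value y
  have hyk : y * k = 3 * L^2 * M^3 := by
    rw [hy, ht, ← hM4]; field_simp
  have hM3 : M^2 ≤ M^3 := by nlinarith [hM1, hMpos.le, sq_nonneg M]
  have hM30 : (0:ℝ) ≤ M^3 := by positivity
  have hLL : 12 * M^3 ≤ 3*L^2*M^3 := by nlinarith [hLsq, hM30]
  have hy2 : 2 ≤ y := by
    have h1 : 2 * (k:ℝ) ≤ y * k := by rw [hyk]; linarith
    exact le_of_mul_le_mul_right (by linarith) hkpos
  have h1 : M^2/8 + lognn ≤ M^2 := by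
    have h9 : lognn ≤ M^2/9 := by linarith
    linarith
  have h2 : M^2 ≤ y * k := by rw [hyk]; linarith
  have h3 : y * k ≤ y ^ k := by
    have := mul_le_pow_self hy2 hk
    linarith [mul_comm y (k:ℝ)]
  have h4 : y ^ k ≤ t ^ k * N₀ := by
    rw [hy, mul_pow]
    exact mul_le_mul_of_nonneg_left hN₀ge htk0
  linarith

set_option maxHeartbeats 1000000 in
lemma GB_ineq {k r : ℕ} (hk : 1 ≤ k) {mR L M t N₀ lognn ε₁ : ℝ}
    (hkpos : 0 < (k:ℝ)) (hrR : 2 ≤ (r:ℝ)) (hL2 : 2 ≤ L) (hM1 : 1 ≤ M) (h3L2M : 3*L^2 < M)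
    (h32k : 32*(k:ℝ) ≤ M^2) (ht : t = 3*1*L^2/M) (hM4 : M^4 = mR)
    (hN₀ge : (mR/(k:ℝ))^k ≤ N₀) (hN₀0 : 0 ≤ N₀) (hlog : lognn ≤ L) (ht0 : 0 ≤ t)
    (hmin : (r:ℝ)*t^k/7 ≤ ε₁) (hε₁0 : 0 ≤ ε₁) :
    M^2/8 + lognn ≤ ε₁^2 * N₀ / (8*r) := by
  have hMpos : (0:ℝ) < M := by linarith
  have hMne : M ≠ 0 := by linarith
  have hkne : (k:ℝ) ≠ 0 := by linarith
  have hrpos : (0:ℝ) < r := by linarith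
  have htk0 : (0:ℝ) ≤ t^k := pow_nonneg ht0 k
  have hLsq : (4:ℝ) ≤ L^2 := by nlinarith
  have hLM9 : 9 * L ≤ M^2 := by nlinarith [mul_self_lt_mul_self (by positivity : (0:ℝ) ≤ 3*L^2) h3L2M]
  set s : ℝ := t ^ k with hs
  clear_value s
  set x : ℝ := t^2 * (mR/k) with hx
  clear_value x
  have hxk : x * k = 9 * L^4 * M^2 := by
    rw [hx, ht, ← hM4]; field_simp; ring
  have hL4 : (16:ℝ) ≤ L^4 := by nlinarith [hLsq]
  have hM20 : (0:ℝ) ≤ M^2 := sq_nonneg M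
  have hLL2 : 144 * M^2 ≤ 9*L^4*M^2 := by nlinarith [hL4, hM20]
  have hx2 : 2 ≤ x := by
    have h1 : 2 * (k:ℝ) ≤ x * k := by rw [hxk]; linarith
    exact le_of_mul_le_mul_right (by linarith) hkpos
  have hxpow : x ^ k ≤ s^2 * N₀ := by
    have h1 : x ^ k = (t^2)^k * (mR/(k:ℝ))^k := by rw [hx, mul_pow]
    have h2 : (t^2)^k = s^2 := by rw [hs, ← pow_mul, ← pow_mul']
    rw [h1, h2]
    exact mul_le_mul_of_nonneg_left hN₀ge (by positivity)
  have hs0 : (0:ℝ) ≤ s := htk0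
  have h196 : 196 * (M^2/8 + lognn) ≤ x ^ k := by
    have h9 : lognn ≤ M^2/9 := by linarith
    have h1 : 196 * (M^2/8 + lognn) ≤ 48 * M^2 := by linarith
    have h2 : 48 * M^2 ≤ x * k := by rw [hxk]; linarith
    have h3 : x * k ≤ x ^ k := by
      have := mul_le_pow_self hx2 hk
      linarith [mul_comm x (k:ℝ)]
    linarith
  have hstep : s^2 * N₀ / 196 ≤ ε₁^2 * N₀ / (8*r) := by
    rw [div_le_div_iff₀ (by norm_num) (by positivity)]
    have hsq : ((r:ℝ)*s/7)^2 ≤ ε₁^2 := by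
      apply pow_le_pow_left₀ (by positivity) (by rw [hs] at hmin ⊢; exact hmin)
    have h1 : ((r:ℝ)*s/7)^2 * N₀ ≤ ε₁^2 * N₀ := mul_le_mul_of_nonneg_right hsq hN₀0
    have h2 : (0:ℝ) ≤ 4*(r:ℝ)*((r:ℝ)-2)*(s^2*N₀) := by
      apply mul_nonneg (mul_nonneg (by positivity) (by linarith)) (by positivity)
    nlinarith [h1, h2]
  calc M^2/8 + lognn ≤ x ^ k / 196 := by linarith
    _ ≤ s^2 * N₀ / 196 := by linarith
    _ ≤ ε₁^2 * N₀ / (8*r) := hstep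

lemma hsum_glue {n r : ℕ} {M X c sm : ℝ} (hrpos : 0 < (r:ℝ)) (hc : 0 < c) (hc2 : c ≤ 2)
    (hM2 : M^2 = sm) (hGX : M^2/8 + Real.log ((n:ℝ)+1) ≤ X) :
    ((n:ℝ)+1) * (c * (r:ℝ) * Real.exp (-X)) ≤ 4 * r * Real.exp (-sm/8) := by
  have hn1 : (0:ℝ) < (n:ℝ)+1 := by positivity
  calc ((n:ℝ)+1) * (c * (r:ℝ) * Real.exp (-X))
      ≤ ((n:ℝ)+1) * (c * (r:ℝ) * Real.exp (-(M^2/8 + Real.log ((n:ℝ)+1)))) := by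
        apply mul_le_mul_of_nonneg_left _ (by positivity)
        apply mul_le_mul_of_nonneg_left _ (by positivity)
        rw [Real.exp_le_exp]
        linarith
    _ = c * (r:ℝ) * Real.exp (-(M^2/8)) := by
        rw [neg_add, Real.exp_add, Real.exp_neg (Real.log ((n:ℝ)+1)), Real.exp_log hn1]
        field_simp
    _ ≤ 4 * r * Real.exp (-sm/8) := by
        rw [← hM2]
        have he : -(M^2)/8 = -(M^2/8) := by ring
        rw [he]
        have hep : (0:ℝ) < Real.exp (-(M^2/8)) := Real.exp_pos _
        nlinarith [mul_pos hrpos hep]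

section Main

open Finset

set_option maxHeartbeats 8000000 in
/-- Corollary 3.12 of the paper: an explicit balanced coloring. -/
theorem explicit_balanced_coloring :
    ∃ Cstar : ℝ, 1 ≤ Cstar ∧
      ∀ n m k r : ℕ, 1 ≤ k → k ≤ m → (m : ℝ) ≤ (n : ℝ) / 2 → 2 ≤ r →
        ∃ n' : ℕ, (n : ℝ) / 2 < (n' : ℝ) ∧ n' ≤ n ∧
          ∃ γ : {S : Finset (Fin n') // S.card = k} → Fin r,
            IsBalancedColoring m
              (4 * (r : ℝ) ^ 2 * k * Real.exp (-Real.sqrt m / (16 * k)) +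
                r * ((3 * Cstar * (Real.logb 2 ((n : ℝ) + r)) ^ 2) /
                  (m : ℝ) ^ ((1 : ℝ) / 4)) ^ k)
              (4 * r * Real.exp (-Real.sqrt m / 8)) γ := by
  classical
  refine ⟨1, le_refl 1, ?_⟩
  intro n m k r hk hkm hmn hr
  have hm1 : 1 ≤ m := le_trans hk hkm
  have hmR : (1:ℝ) ≤ (m:ℝ) := by exact_mod_cast hm1
  have hn2 : 2 ≤ n := by
    have : (2:ℝ) ≤ (n:ℝ) := by linarith
    exact_mod_cast this
  have hr1 : 1 ≤ r := le_trans (by norm_num) hr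
  have hrR : (2:ℝ) ≤ (r:ℝ) := by exact_mod_cast hr
  have hrpos : (0:ℝ) < r := by linarith
  have hkR : (1:ℝ) ≤ (k:ℝ) := by exact_mod_cast hk
  have hkpos : (0:ℝ) < (k:ℝ) := by linarith
  refine ⟨n, ?_, le_refl n, ?_⟩
  · have : (2:ℝ) ≤ (n:ℝ) := by exact_mod_cast hn2
    linarith
  set L : ℝ := Real.logb 2 ((n : ℝ) + r) with hL
  set M : ℝ := (m : ℝ) ^ ((1 : ℝ) / 4) with hM
  set t : ℝ := (3 * 1 * L ^ 2) / M with ht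
  set εa : ℝ := 4 * (r : ℝ) ^ 2 * k * Real.exp (-Real.sqrt m / (16 * k)) with hεa
  set δ : ℝ := 4 * r * Real.exp (-Real.sqrt m / 8) with hδ
  set ε : ℝ := εa + r * t ^ k with hεdef
  clear_value L M t εa δ ε
  have hm0 : (0:ℝ) ≤ (m:ℝ) := Nat.cast_nonneg m
  have hMpos : 0 < M := by rw [hM]; exact Real.rpow_pos_of_pos (by linarith) _
  have hM1 : 1 ≤ M := by rw [hM]; exact Real.one_le_rpow hmR (by norm_num)
  have hM4 : M ^ 4 = (m:ℝ) := by
    rw [hM, ← Real.rpow_natCast ((m:ℝ) ^ ((1:ℝ)/4)) 4, ← Real.rpow_mul hm0]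
    norm_num
  have hM2 : M ^ 2 = Real.sqrt m := by
    rw [hM, ← Real.rpow_natCast ((m:ℝ) ^ ((1:ℝ)/4)) 2, ← Real.rpow_mul hm0,
      Real.sqrt_eq_rpow]
    norm_num
  have hlog2pos : (0:ℝ) < Real.log 2 := Real.log_pos (by norm_num)
  have hnr4 : (4:ℝ) ≤ (n:ℝ) + r := by
    have h1 : (2:ℝ) ≤ (n:ℝ) := by exact_mod_cast hn2
    linarith
  have hL2 : 2 ≤ L := by
    rw [hL, Real.logb, le_div_iff₀ hlog2pos]
    have h1 : (2:ℝ) * Real.log 2 = Real.log 4 := by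
      rw [show (4:ℝ) = 2^(2:ℕ) by norm_num, Real.log_pow]
      push_cast; ring
    rw [h1]
    exact (Real.log_le_log_iff (by norm_num) (by linarith)).mpr hnr4
  have hL0 : (0:ℝ) < L := by linarith
  have hlogn : Real.log ((n:ℝ) + 1) ≤ L := by
    have h1 : Real.log ((n:ℝ)+1) ≤ Real.log ((n:ℝ)+r) := by
      apply (Real.log_le_log_iff (by positivity) (by linarith)).mpr
      linarith
    have h2 : Real.log ((n:ℝ)+r) = L * Real.log 2 := by
      rw [hL, Real.logb]
      field_simp
    have h3 : Real.log 2 ≤ 1 := by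
      have := Real.log_two_lt_d9
      linarith
    nlinarith
  have hεa0 : (0:ℝ) ≤ εa := by rw [hεa]; positivity
  have ht0 : (0:ℝ) ≤ t := by rw [ht]; positivity
  have htk0 : (0:ℝ) ≤ t ^ k := pow_nonneg ht0 k
  have hδ0 : (0:ℝ) ≤ δ := by rw [hδ]; positivity
  have hεrt : (r:ℝ) * t ^ k ≤ ε := by rw [hεdef]; linarith
  have hε0 : (0:ℝ) ≤ ε := by
    rw [hεdef]
    have : (0:ℝ) ≤ (r:ℝ) * t ^ k := by positivity
    linarith
  -- cheat case 1 : 1 ≤ t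
  by_cases hch1 : 1 ≤ t
  · refine ⟨fun _ => ⟨0, by omega⟩, ?_⟩
    apply balanced_of_eps_big hr1 hδ0
    have h1 : (1:ℝ) ≤ t ^ k := one_le_pow₀ hch1
    have h2 : (r:ℝ) * 1 ≤ (r:ℝ) * t ^ k := by
      apply mul_le_mul_of_nonneg_left h1 (by linarith)
    rw [hεdef]; linarith
  push_neg at hch1
  -- cheat case 2 : r ≤ εa
  by_cases hch2 : (r:ℝ) ≤ εa
  · refine ⟨fun _ => ⟨0, by omega⟩, ?_⟩
    apply balanced_of_eps_big hr1 hδ0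
    have : (0:ℝ) ≤ (r:ℝ) * t ^ k := by positivity
    rw [hεdef]; linarith
  push_neg at hch2
  -- hard case
  have h3L2M : 3 * L ^ 2 < M := by
    have h1 : t < 1 := hch1
    rw [ht, div_lt_one hMpos] at h1
    linarith
  have hLM9 : 9 * L ≤ M ^ 2 := by
    have h1 : (3*L^2) * (3*L^2) < M * M := by
      apply mul_self_lt_mul_self (by positivity) h3L2M
    nlinarith
  have hLsq : (4:ℝ) ≤ L^2 := by nlinarith
  -- from εa < r : 32 k ≤ M²
  have h32k : 32 * (k:ℝ) ≤ M ^ 2 := by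
    have hu : Real.log (4 * r * k) < Real.sqrt m / (16 * k) := by
      have h1 : 4 * (r:ℝ) * k * Real.exp (-Real.sqrt m / (16 * k)) < 1 := by
        have h2 : (r:ℝ) * (4 * (r:ℝ) * k * Real.exp (-Real.sqrt m / (16 * k))) < (r:ℝ) * 1 := by
          rw [mul_one]
          calc (r:ℝ) * (4 * (r:ℝ) * k * Real.exp (-Real.sqrt m / (16 * k)))
              = εa := by rw [hεa]; ring
            _ < r := hch2
        exact lt_of_mul_lt_mul_left h2 hrpos.le
      have h3 : 4 * (r:ℝ) * k < Real.exp (Real.sqrt m / (16 * k)) := by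
        have he : (0:ℝ) < Real.exp (-Real.sqrt m / (16 * k)) := Real.exp_pos _
        have h4 : Real.exp (-Real.sqrt m / (16 * k)) * Real.exp (Real.sqrt m / (16 * k)) = 1 := by
          rw [← Real.exp_add]; ring_nf; exact Real.exp_zero
        nlinarith [Real.exp_pos (Real.sqrt m / (16 * k))]
      calc Real.log (4 * r * k) < Real.log (Real.exp (Real.sqrt m / (16 * k))) := by
            apply Real.log_lt_log (by positivity) h3
        _ = Real.sqrt m / (16 * k) := Real.log_exp _
    have hln2 : (2:ℝ) ≤ Real.log (4 * r * k) := by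
      have h8 : (8:ℝ) ≤ 4 * r * k := by nlinarith
      have hlog8 : (2:ℝ) ≤ Real.log 8 := by
        rw [← Real.log_exp 2]
        apply (Real.log_le_log_iff (Real.exp_pos 2) (by norm_num)).mpr
        have h1 : Real.exp 1 < 2.7182818286 := Real.exp_one_lt_d9
        have h2 : Real.exp 2 = Real.exp 1 * Real.exp 1 := by
          rw [← Real.exp_add]; norm_num
        nlinarith [Real.exp_pos 1]
      calc (2:ℝ) ≤ Real.log 8 := hlog8
        _ ≤ Real.log (4 * r * k) := by
          apply (Real.log_le_log_iff (by norm_num) (by positivity)).mpr h8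
    have h5 : (2:ℝ) < Real.sqrt m / (16 * k) := lt_of_le_of_lt hln2 hu
    rw [lt_div_iff₀ (by positivity)] at h5
    rw [hM2]
    linarith
  set N₀ : ℝ := (m.choose k : ℝ) with hN₀
  clear_value N₀
  have hN₀0 : (0:ℝ) ≤ N₀ := by rw [hN₀]; exact Nat.cast_nonneg _
  have hN₀ge : ((m:ℝ)/k) ^ k ≤ N₀ := by rw [hN₀]; exact pow_div_le_choose k m hkm
  have hkne : (k:ℝ) ≠ 0 := by linarith
  have hMne : M ≠ 0 := by linarith
  -- branch split
  by_cases hbr : 7 ≤ (r:ℝ) * t ^ k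
  · -- branch A
    have hGA : M^2/8 + Real.log ((n:ℝ)+1) ≤ t ^ k * N₀ :=
      GA_ineq hk hkpos hL2 hM1 h3L2M h32k ht hM4 hN₀ge hlogn ht0
    have hε7 : 7 ≤ ε := by rw [hεdef]; linarith only [hεa0, hbr]
    apply exists_good_coloring hr1 hδ0
      (E := (r:ℝ) * Real.exp (-(t ^ k * N₀)))
      (by positivity)
    · -- hbound
      intro ℓ hmℓ hℓn A hA inst
      have hb := branchA_bound hr1 htk0 hε7 hεrt A inst
      refine le_trans hb ?_
      apply mul_le_mul_of_nonneg_right _ (by positivity)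
      apply mul_le_mul_of_nonneg_left _ (by positivity)
      rw [Real.exp_le_exp]
      have hmono : N₀ ≤ (A.card.choose k : ℝ) := by
        rw [hA, hN₀]
        exact_mod_cast Nat.choose_le_choose k hmℓ
      linarith only [mul_le_mul_of_nonneg_left hmono htk0]
    · -- hsum
      have hglue := hsum_glue (n := n) (c := 1) hrpos one_pos (by norm_num) hM2 hGA
      rw [hδ]
      linarith only [hglue]
  · -- branch B
    push_neg at hbr
    set ε₁ : ℝ := min ε 1 with hε₁
    clear_value ε₁
    have hε₁0 : 0 ≤ ε₁ := by rw [hε₁]; exact le_min hε0 zero_le_one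
    have hε₁1 : ε₁ ≤ 1 := by rw [hε₁]; exact min_le_right _ _
    have hε₁ε : ε₁ ≤ ε := by rw [hε₁]; exact min_le_left _ _
    have hmin : (r:ℝ) * t ^ k / 7 ≤ ε₁ := by
      rcases le_total ε 1 with h | h
      · rw [hε₁, min_eq_left h]
        have h1 : (0:ℝ) ≤ (r:ℝ) * t ^ k := by positivity
        linarith only [hεrt, h1]
      · rw [hε₁, min_eq_right h]
        linarith only [hbr]
    have hGB : M^2/8 + Real.log ((n:ℝ)+1) ≤ ε₁^2 * N₀ / (8*r) :=
      GB_ineq hk hkpos hrR hL2 hM1 h3L2M h32k ht hM4 hN₀ge hN₀0 hlogn ht0 hmin hε₁0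
    apply exists_good_coloring hr1 hδ0
      (E := 2 * (r:ℝ) * Real.exp (-(ε₁^2 * N₀ / (8*r))))
      (by positivity)
    · -- hbound
      intro ℓ hmℓ hℓn A hA inst
      have hb := branchB_bound hr1 hε₁0 hε₁1 hε₁ε A inst
      refine le_trans hb ?_
      apply mul_le_mul_of_nonneg_right _ (by positivity)
      apply mul_le_mul_of_nonneg_left _ (by positivity)
      rw [Real.exp_le_exp]
      have hmono : N₀ ≤ (A.card.choose k : ℝ) := by
        rw [hA, hN₀]
        exact_mod_cast Nat.choose_le_choose k hmℓ
      have h1 : ε₁^2 * N₀ ≤ ε₁^2 * (A.card.choose k : ℝ) :=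
        mul_le_mul_of_nonneg_left hmono (sq_nonneg ε₁)
      linarith only [div_le_div_of_nonneg_right h1 (by positivity : (0:ℝ) ≤ 8*(r:ℝ))]
    · -- hsum
      have hglue := hsum_glue (n := n) (c := 2) hrpos two_pos (by norm_num) hM2 hGB
      rw [hδ]
      linarith only [hglue]

end Main
end

section
/- Fix integers D and B with 0 ≤ D < B, and let y ∈ {0,1}^B be a string with Hamming weight |y| > D. Then there is a function ζ_y : {0,1}^B → ℝ such that: (1) supp ζ_y ⊆ {x ∈ {0,1}^B : x ≤ y componentwise and |x| ≤ D} ∪ {y}; (2) ζ_y(y) = 1; (3) ‖ζ_y‖₁ ≤ 1 + 2^D·binom(B,D); (4) orth(ζ_y) > D. -/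
open scoped ENNReal

/-- Hamming weight of a Boolean vector. -/
def hw {ι : Type*} [Fintype ι] (x : ι → Bool) : ℕ :=
  (Finset.univ.filter fun i => x i = true).card

/-- Embedding of a Boolean point into `ℝ^ι`. -/
def breal {ι : Type*} (x : ι → Bool) : ι → ℝ := fun i => if x i then 1 else 0

/-- The orthogonal content of `φ`: the least total degree of a real polynomial having
nonzero inner product with `φ`; `⊤` if no such polynomial exists. -/
noncomputable def orthE {ι : Type*} [Fintype ι] [DecidableEq ι] (φ : (ι → Bool) → ℝ) : ℝ≥0∞ :=
  sInf {d : ℝ≥0∞ | ∃ p : MvPolynomial ι ℝ, (p.totalDegree : ℝ≥0∞) = d ∧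
    (∑ x : ι → Bool, φ x * MvPolynomial.eval (breal x) p) ≠ 0}

open scoped PowerSeries

lemma coeff_one_sub_pow (n t : ℕ) :
    PowerSeries.coeff (R := ℝ) t ((1 - PowerSeries.X) ^ n) = (-1 : ℝ) ^ t * n.choose t := by
  have h : ((1 : ℝ⟦X⟧) - PowerSeries.X) ^ n
      = ∑ k ∈ Finset.range (n + 1),
          PowerSeries.C (R := ℝ) ((-1 : ℝ) ^ k * n.choose k) * PowerSeries.X ^ k := by
    rw [sub_eq_add_neg, add_comm, add_pow]
    refine Finset.sum_congr rfl fun k _ => ?_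
    have : (-PowerSeries.X : ℝ⟦X⟧) ^ k = PowerSeries.C (R := ℝ) ((-1 : ℝ) ^ k) * PowerSeries.X ^ k := by
      rw [neg_pow]
      simp [map_pow, map_neg, map_one]
    rw [this]
    ring_nf
    simp [map_pow, map_neg, map_one]
    ring
  rw [h, map_sum]
  simp only [PowerSeries.coeff_C_mul, PowerSeries.coeff_X_pow]
  rw [Finset.sum_eq_single t]
  · by_cases ht : t ≤ n
    · simp
    · have : n.choose t = 0 := Nat.choose_eq_zero_of_lt (by omega)
      simp [this]
  · intro k _ hk
    simp [Ne.symm hk]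
  · intro ht
    simp only [Finset.mem_range, not_lt] at ht
    have : n.choose t = 0 := Nat.choose_eq_zero_of_lt (by omega)
    simp [this]

lemma key_identity (n d : ℕ) (h : d < n) :
    ∑ t ∈ Finset.range (d + 1),
      (n.choose t : ℝ) * ((-1 : ℝ) ^ (d - t) * ((n - t - 1).choose (d - t) : ℝ)) = 1 := by
  set e := n - d - 1 with he
  have hn : n = d + (e + 1) := by omega
  have hps : ((1 - PowerSeries.X : ℝ⟦X⟧) ^ n) * (PowerSeries.mk fun k => ((e + k).choose e : ℝ))
      = (1 - PowerSeries.X) ^ d := by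
    rw [hn, pow_add, mul_assoc, mul_comm ((1 - PowerSeries.X : ℝ⟦X⟧) ^ (e + 1)),
      PowerSeries.mk_add_choose_mul_one_sub_pow_eq_one, mul_one]
  have hc := congrArg (PowerSeries.coeff (R := ℝ) d) hps
  rw [PowerSeries.coeff_mul, Finset.Nat.sum_antidiagonal_eq_sum_range_succ_mk] at hc
  simp only [coeff_one_sub_pow, PowerSeries.coeff_mk, Nat.choose_self, Nat.cast_one, mul_one] at hc
  have hc2 : ∑ t ∈ Finset.range (d + 1),
      ((-1 : ℝ) ^ t * n.choose t * ((n - t - 1).choose (d - t) : ℝ)) = (-1 : ℝ) ^ d := by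
    rw [← hc]
    refine Finset.sum_congr rfl fun t ht => ?_
    simp only [Finset.mem_range] at ht
    have h1 : e + (d - t) = n - t - 1 := by omega
    have h2 : (n - t - 1).choose e = (n - t - 1).choose (d - t) := by
      have h3 : (n - t - 1) - (d - t) = e := by omega
      rw [← h3, Nat.choose_symm (by omega)]
    rw [h1, h2]
  calc ∑ t ∈ Finset.range (d + 1),
      (n.choose t : ℝ) * ((-1 : ℝ) ^ (d - t) * ((n - t - 1).choose (d - t) : ℝ))
      = ∑ t ∈ Finset.range (d + 1),
        (-1 : ℝ) ^ d * ((-1 : ℝ) ^ t * n.choose t * ((n - t - 1).choose (d - t) : ℝ)) := by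
        refine Finset.sum_congr rfl fun t ht => ?_
        simp only [Finset.mem_range] at ht
        have heq : (-1 : ℝ) ^ (d - t) = (-1 : ℝ) ^ d * (-1 : ℝ) ^ t := by
          have h4 : (-1 : ℝ) ^ (d - t) * (-1 : ℝ) ^ t = (-1 : ℝ) ^ d := by
            rw [← pow_add]; congr 1; omega
          have h5 : (-1 : ℝ) ^ t * (-1 : ℝ) ^ t = 1 := by
            rw [← pow_add, ← two_mul, pow_mul]; norm_num
          calc (-1 : ℝ) ^ (d - t) = (-1 : ℝ) ^ (d - t) * ((-1 : ℝ) ^ t * (-1 : ℝ) ^ t) := by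
                rw [h5, mul_one]
            _ = (-1 : ℝ) ^ d * (-1 : ℝ) ^ t := by rw [← mul_assoc, h4]
        rw [heq]; ring
    _ = (-1 : ℝ) ^ d * ∑ t ∈ Finset.range (d + 1),
        ((-1 : ℝ) ^ t * n.choose t * ((n - t - 1).choose (d - t) : ℝ)) := by
        rw [Finset.mul_sum]
    _ = 1 := by rw [hc2, ← pow_add, ← two_mul, pow_mul]; norm_num

lemma nat_norm_bound (B D m : ℕ) (hDm : D < m) (hmB : m ≤ B) :
    ∑ k ∈ Finset.range (D + 1), m.choose k * ((m - k - 1).choose (D - k))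
      ≤ 2 ^ D * B.choose D := by
  calc ∑ k ∈ Finset.range (D + 1), m.choose k * ((m - k - 1).choose (D - k))
      ≤ ∑ k ∈ Finset.range (D + 1), B.choose D * D.choose k := by
        refine Finset.sum_le_sum fun k hk => ?_
        simp only [Finset.mem_range] at hk
        have hk' : k ≤ D := by omega
        calc m.choose k * ((m - k - 1).choose (D - k))
            ≤ m.choose k * ((m - k).choose (D - k)) :=
              Nat.mul_le_mul_left _ (Nat.choose_le_choose _ (by omega))
          _ = m.choose D * D.choose k := (Nat.choose_mul hk').symm
          _ ≤ B.choose D * D.choose k :=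
              Nat.mul_le_mul_right _ (Nat.choose_le_choose _ hmB)
    _ = B.choose D * ∑ k ∈ Finset.range (D + 1), D.choose k := by rw [Finset.mul_sum]
    _ = 2 ^ D * B.choose D := by rw [Nat.sum_range_choose, Nat.mul_comm]


/-- Lemma 2.8 of the paper (generalized Razborov–Sherstov): for `0 ≤ D < B` and a string
`y ∈ {0,1}^B` of Hamming weight `> D`, there is `ζ_y : {0,1}^B → ℝ` supported on
`{x ≤ y, |x| ≤ D} ∪ {y}` with `ζ_y(y) = 1`, `‖ζ_y‖₁ ≤ 1 + 2^D·C(B,D)`, and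
`orth ζ_y > D`. -/
theorem razborov_sherstov_generalized (D B : ℕ) (hDB : D < B)
    (y : Fin B → Bool) (hy : D < hw y) :
    ∃ ζ : (Fin B → Bool) → ℝ,
      (∀ x, ζ x ≠ 0 → ((∀ i, x i = true → y i = true) ∧ hw x ≤ D) ∨ x = y) ∧
      ζ y = 1 ∧
      (∑ x : Fin B → Bool, |ζ x|) ≤ 1 + 2 ^ D * (B.choose D : ℝ) ∧
      (D : ℝ≥0∞) < orthE ζ := by
  classical
  set m := hw y with hm
  set Y : Finset (Fin B) := Finset.univ.filter (fun i => y i = true) with hYdef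
  have hYcard : Y.card = m := rfl
  have hmemY : ∀ i, i ∈ Y ↔ y i = true := by intro i; simp [hYdef]
  have hmB : m ≤ B := by
    rw [← hYcard]
    simpa using Finset.card_le_card (Finset.subset_univ Y)
  set fb : Finset (Fin B) → (Fin B → Bool) := fun T i => decide (i ∈ T) with hfbdef
  have hw_fb : ∀ T, hw (fb T) = T.card := by
    intro T
    simp [hw, hfbdef, Finset.filter_mem_eq_inter]
  have fbY : fb Y = y := by
    funext i
    simp [hfbdef, hmemY i]
  have fb_inj : Function.Injective fb := by
    intro S T hST
    ext i
    have := congrFun hST i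
    simpa [hfbdef] using this
  have fb_bij : Function.Bijective fb := by
    refine ⟨fb_inj, fun x => ⟨Finset.univ.filter (fun i => x i = true), ?_⟩⟩
    funext i
    simp [hfbdef]
  have hsum : ∀ f : (Fin B → Bool) → ℝ,
      ∑ x : Fin B → Bool, f x = ∑ T : Finset (Fin B), f (fb T) :=
    fun f => (Fintype.sum_bijective fb fb_bij _ f (fun T => rfl)).symm
  set c : ℕ → ℝ := fun k => (-1 : ℝ) ^ (D - k) * ((m - k - 1).choose (D - k) : ℝ) with hcdef
  set ζ : (Fin B → Bool) → ℝ := fun x =>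
    if x = y then 1
    else if (∀ i, x i = true → y i = true) ∧ hw x ≤ D then -(c (hw x)) else 0 with hζdef
  have hζy : ζ y = 1 := by simp [hζdef]
  have hsub_iff : ∀ T, (∀ i, fb T i = true → y i = true) ↔ T ⊆ Y := by
    intro T
    constructor
    · intro h i hi
      rw [hmemY]
      exact h i (by simp [hfbdef, hi])
    · intro h i hi
      rw [← hmemY]
      exact h (by simpa [hfbdef] using hi)
  have hζfb : ∀ T, ζ (fb T) =
      if T = Y then 1 else if T ⊆ Y ∧ T.card ≤ D then -(c T.card) else 0 := by
    intro T
    by_cases hTY : T = Y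
    · subst hTY; simp [hζdef, fbY]
    · have hne : fb T ≠ y := fun h => hTY (fb_inj (h.trans fbY.symm))
      rw [hζdef]
      simp only [hne, if_false, hTY, if_false, hw_fb T, hsub_iff T]
  refine ⟨ζ, ?_, hζy, ?_, ?_⟩
  · -- support
    intro x hx
    by_cases hxy : x = y
    · exact Or.inr hxy
    by_cases hcond : (∀ i, x i = true → y i = true) ∧ hw x ≤ D
    · exact Or.inl hcond
    · exfalso; apply hx; simp [hζdef, hxy, hcond]
  · -- norm bound
    have habs : ∀ T, |ζ (fb T)| = if T = Y then 1
        else if T ⊆ Y ∧ T.card ≤ D then ((m - T.card - 1).choose (D - T.card) : ℝ) else 0 := by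
      intro T
      rw [hζfb T]
      by_cases hTY : T = Y
      · simp [hTY]
      · simp only [hTY, if_false]
        by_cases h2 : T ⊆ Y ∧ T.card ≤ D
        · rw [if_pos h2, if_pos h2, abs_neg, hcdef]
          rw [abs_mul, abs_pow, abs_neg, abs_one, one_pow, one_mul, Nat.abs_cast]
        · simp [h2]
    rw [hsum (fun x => |ζ x|)]
    set F : Finset (Fin B) → ℝ := fun T =>
      if T ⊆ Y ∧ T.card ≤ D then ((m - T.card - 1).choose (D - T.card) : ℝ) else 0 with hFdef
    have hFY : F Y = 0 := by
      have hno : ¬ (Y ⊆ Y ∧ Y.card ≤ D) := by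
        rintro ⟨-, h⟩; rw [hYcard] at h; omega
      simp only [hFdef]
      rw [if_neg hno]
    have hsplit : ∑ T : Finset (Fin B), |ζ (fb T)| = 1 + ∑ T : Finset (Fin B), F T := by
      rw [← Finset.add_sum_erase Finset.univ (fun T => |ζ (fb T)|) (Finset.mem_univ Y)]
      congr 1
      · rw [habs Y]; simp
      · rw [← Finset.sum_erase Finset.univ hFY]
        refine Finset.sum_congr rfl fun T hT => ?_
        have hTY : T ≠ Y := Finset.ne_of_mem_erase hT
        rw [habs T]; simp [hTY, hFdef]
    rw [hsplit]
    have hstep : ∑ T : Finset (Fin B), F T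
        = ∑ T ∈ Y.powerset, F T := by
      refine (Finset.sum_subset (Finset.subset_univ _) fun T _ hT => ?_).symm
      have : ¬ T ⊆ Y := by simpa [Finset.mem_powerset] using hT
      simp [hFdef, this]
    set f₀ : ℕ → ℝ := fun k => if k ≤ D then ((m - k - 1).choose (D - k) : ℝ) else 0 with hf₀def
    have hstep2 : ∑ T ∈ Y.powerset, F T = ∑ T ∈ Y.powerset, f₀ T.card := by
      refine Finset.sum_congr rfl fun T hT => ?_
      have hTY : T ⊆ Y := Finset.mem_powerset.mp hT
      by_cases h2 : T.card ≤ D <;> simp [hFdef, hf₀def, hTY, h2]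
    have hstep3 : ∑ T ∈ Y.powerset, f₀ T.card
        = ∑ k ∈ Finset.range (Y.card + 1), Y.card.choose k • f₀ k :=
      Finset.sum_powerset_apply_card f₀
    rw [hstep, hstep2, hstep3, hYcard]
    have htrunc : ∑ k ∈ Finset.range (m + 1), m.choose k • f₀ k
        = ∑ k ∈ Finset.range (D + 1), (m.choose k * ((m - k - 1).choose (D - k)) : ℝ) := by
      rw [← Finset.sum_subset (Finset.range_subset_range.mpr (by omega : D + 1 ≤ m + 1))
        (fun k _ hk => ?_)]
      · refine Finset.sum_congr rfl fun k hk => ?_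
        simp only [Finset.mem_range] at hk
        rw [hf₀def]
        simp only []
        rw [if_pos (by omega : k ≤ D), nsmul_eq_mul]
      · simp only [Finset.mem_range, not_lt] at hk
        rw [hf₀def]
        simp only []
        rw [if_neg (by omega : ¬ k ≤ D), smul_zero]
    rw [htrunc]
    have hb := nat_norm_bound B D m hy hmB
    have : (∑ k ∈ Finset.range (D + 1), (m.choose k * ((m - k - 1).choose (D - k)) : ℝ))
        ≤ (2 ^ D * B.choose D : ℝ) := by
      have := (Nat.cast_le (α := ℝ)).mpr hb
      push_cast at this ⊢
      convert this using 2
    linarith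
  · -- orthogonality
    have hS : ∀ S : Finset (Fin B), S.card ≤ D →
        ∑ x : Fin B → Bool, ζ x * ∏ i ∈ S, breal x i = 0 := by
      intro S hScard
      rw [hsum (fun x => ζ x * ∏ i ∈ S, breal x i)]
      have hprod : ∀ T, (∏ i ∈ S, breal (fb T) i) = if S ⊆ T then 1 else 0 := by
        intro T
        by_cases hST : S ⊆ T
        · rw [if_pos hST]
          refine Finset.prod_eq_one fun i hi => ?_
          simp [breal, hfbdef, hST hi]
        · rw [if_neg hST]
          obtain ⟨i, hiS, hiT⟩ := Finset.not_subset.mp hST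
          refine Finset.prod_eq_zero hiS ?_
          simp [breal, hfbdef, hiT]
      by_cases hSY : S ⊆ Y
      · -- main case
        set j := S.card with hj
        set G : Finset (Fin B) → ℝ := fun T =>
          if S ⊆ T ∧ T ⊆ Y ∧ T.card ≤ D then -(c T.card) else 0 with hGdef
        have hGY : G Y = 0 := by
          have hno : ¬ (S ⊆ Y ∧ Y ⊆ Y ∧ Y.card ≤ D) := by
            rintro ⟨-, -, h⟩; rw [hYcard] at h; omega
          simp only [hGdef]
          rw [if_neg hno]
        have hsplit : ∑ T : Finset (Fin B), ζ (fb T) * ∏ i ∈ S, breal (fb T) i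
            = 1 + ∑ T : Finset (Fin B), G T := by
          rw [← Finset.add_sum_erase Finset.univ _ (Finset.mem_univ Y)]
          congr 1
          · rw [hζfb Y, hprod Y]; simp [hSY]
          · rw [← Finset.sum_erase Finset.univ hGY]
            refine Finset.sum_congr rfl fun T hT => ?_
            have hTY : T ≠ Y := Finset.ne_of_mem_erase hT
            rw [hζfb T, hprod T]
            simp only [hTY, if_false, hGdef]
            by_cases h1 : S ⊆ T
            · by_cases h2 : T ⊆ Y ∧ T.card ≤ D
              · simp [h1, h2]
              · have : ¬ (S ⊆ T ∧ T ⊆ Y ∧ T.card ≤ D) := by tauto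
                simp [h1, h2, this]
            · have : ¬ (S ⊆ T ∧ T ⊆ Y ∧ T.card ≤ D) := by tauto
              simp [h1, this]
        rw [hsplit]
        have hA : ∑ T : Finset (Fin B), G T
            = ∑ T ∈ Y.powerset.filter (fun T => S ⊆ T), G T := by
          refine (Finset.sum_subset (Finset.subset_univ _) fun T _ hT => ?_).symm
          have hno : ¬ (S ⊆ T ∧ T ⊆ Y) := by
            intro h
            exact hT (by simp [Finset.mem_filter, Finset.mem_powerset, h.1, h.2])
          have hno2 : ¬ (S ⊆ T ∧ T ⊆ Y ∧ T.card ≤ D) := by tauto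
          simp only [hGdef]
          rw [if_neg hno2]
        have hB : ∑ T ∈ Y.powerset.filter (fun T => S ⊆ T), G T
            = ∑ u ∈ (Y \ S).powerset, G (S ∪ u) := by
          refine Finset.sum_nbij' (fun T => T \ S) (fun u => S ∪ u) ?_ ?_ ?_ ?_ ?_
          · intro T hT
            simp only [Finset.mem_filter, Finset.mem_powerset] at hT
            exact Finset.mem_powerset.mpr (Finset.sdiff_subset_sdiff hT.1 le_rfl)
          · intro u hu
            simp only [Finset.mem_powerset] at hu
            refine Finset.mem_filter.mpr ⟨Finset.mem_powerset.mpr ?_, Finset.subset_union_left⟩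
            exact Finset.union_subset hSY (hu.trans (Finset.sdiff_subset))
          · intro T hT
            simp only [Finset.mem_filter, Finset.mem_powerset] at hT
            exact Finset.union_sdiff_of_subset hT.2
          · intro u hu
            simp only [Finset.mem_powerset] at hu
            have hdisj : Disjoint S u :=
              Finset.disjoint_of_subset_right hu Finset.disjoint_sdiff
            exact Finset.union_sdiff_cancel_left hdisj
          · intro T hT
            simp only [Finset.mem_filter, Finset.mem_powerset] at hT
            rw [Finset.union_sdiff_of_subset hT.2]
        rw [hA, hB]
        have hcard_su : ∀ u ∈ (Y \ S).powerset, (S ∪ u).card = j + u.card := by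
          intro u hu
          simp only [Finset.mem_powerset] at hu
          have hdisj : Disjoint S u :=
            Finset.disjoint_of_subset_right hu Finset.disjoint_sdiff
          rw [Finset.card_union_of_disjoint hdisj]
        set g₀ : ℕ → ℝ := fun t => if j + t ≤ D then -(c (j + t)) else 0 with hg₀def
        have hGsu : ∀ u ∈ (Y \ S).powerset, G (S ∪ u) = g₀ u.card := by
          intro u hu
          have hucard := hcard_su u hu
          simp only [Finset.mem_powerset] at hu
          have h1 : S ⊆ S ∪ u := Finset.subset_union_left
          have h2 : S ∪ u ⊆ Y := Finset.union_subset hSY (hu.trans Finset.sdiff_subset)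
          simp only [hGdef, hg₀def, hucard, h1, h2, true_and]
        have hstep4 : ∑ u ∈ (Y \ S).powerset, g₀ u.card
            = ∑ t ∈ Finset.range ((Y \ S).card + 1), (Y \ S).card.choose t • g₀ t :=
          Finset.sum_powerset_apply_card g₀
        rw [Finset.sum_congr rfl hGsu, hstep4]
        have hYS : (Y \ S).card = m - j := by
          rw [Finset.card_sdiff_of_subset hSY, hYcard]
        rw [hYS]
        set n := m - j with hn
        set d := D - j with hd
        have hjD : j ≤ D := hScard
        have hdn : d < n := by omega
        have htrunc : ∑ t ∈ Finset.range (n + 1), n.choose t • g₀ t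
            = ∑ t ∈ Finset.range (d + 1), (n.choose t : ℝ) * (-(c (j + t))) := by
          rw [← Finset.sum_subset (Finset.range_subset_range.mpr (by omega : d + 1 ≤ n + 1))
            (fun t _ ht => ?_)]
          · refine Finset.sum_congr rfl fun t ht => ?_
            simp only [Finset.mem_range] at ht
            rw [hg₀def]
            simp only []
            rw [if_pos (by omega : j + t ≤ D), nsmul_eq_mul]
          · simp only [Finset.mem_range, not_lt] at ht
            rw [hg₀def]
            simp only []
            rw [if_neg (by omega : ¬ j + t ≤ D), smul_zero]
        rw [htrunc]
        have hcval : ∀ t, t ≤ d → c (j + t)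
            = (-1 : ℝ) ^ (d - t) * ((n - t - 1).choose (d - t) : ℝ) := by
          intro t ht
          rw [hcdef]
          have e1 : D - (j + t) = d - t := by omega
          have e2 : m - (j + t) - 1 = n - t - 1 := by omega
          simp only [e1, e2]
        have : ∑ t ∈ Finset.range (d + 1), (n.choose t : ℝ) * (-(c (j + t)))
            = -(∑ t ∈ Finset.range (d + 1),
                (n.choose t : ℝ) * ((-1 : ℝ) ^ (d - t) * ((n - t - 1).choose (d - t) : ℝ))) := by
          rw [← Finset.sum_neg_distrib]
          refine Finset.sum_congr rfl fun t ht => ?_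
          simp only [Finset.mem_range] at ht
          rw [hcval t (by omega)]
          ring
        rw [this, key_identity n d hdn]
        ring
      · -- S ⊄ Y : every term vanishes
        refine Finset.sum_eq_zero fun T _ => ?_
        rw [hζfb T, hprod T]
        by_cases hTY : T = Y
        · subst hTY
          rw [if_neg hSY]
          simp
        · simp only [hTY, if_false]
          by_cases h2 : T ⊆ Y ∧ T.card ≤ D
          · by_cases h3 : S ⊆ T
            · exact absurd (h3.trans h2.1) hSY
            · simp [h3]
          · simp [h2]
    have hpoly : ∀ p : MvPolynomial (Fin B) ℝ, p.totalDegree ≤ D →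
        ∑ x : Fin B → Bool, ζ x * MvPolynomial.eval (breal x) p = 0 := by
      intro p hp
      have hstep : ∀ x : Fin B → Bool, ζ x * MvPolynomial.eval (breal x) p
          = ∑ dd ∈ p.support, MvPolynomial.coeff dd p * (ζ x * ∏ i ∈ dd.support, breal x i) := by
        intro x
        rw [MvPolynomial.eval_eq, Finset.mul_sum]
        refine Finset.sum_congr rfl fun dd hdd => ?_
        have hpow : ∏ i ∈ dd.support, breal x i ^ dd i = ∏ i ∈ dd.support, breal x i := by
          refine Finset.prod_congr rfl fun i hi => ?_
          have hne : dd i ≠ 0 := Finsupp.mem_support_iff.mp hi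
          by_cases hxi : x i
          · simp [breal, hxi]
          · simp [breal, hxi, zero_pow hne]
        rw [hpow]; ring
      calc ∑ x : Fin B → Bool, ζ x * MvPolynomial.eval (breal x) p
          = ∑ x : Fin B → Bool, ∑ dd ∈ p.support,
              MvPolynomial.coeff dd p * (ζ x * ∏ i ∈ dd.support, breal x i) :=
            Finset.sum_congr rfl fun x _ => hstep x
        _ = ∑ dd ∈ p.support, MvPolynomial.coeff dd p *
              ∑ x : Fin B → Bool, ζ x * ∏ i ∈ dd.support, breal x i := by
            rw [Finset.sum_comm]
            exact Finset.sum_congr rfl fun dd _ => by rw [Finset.mul_sum]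
        _ = 0 := by
            refine Finset.sum_eq_zero fun dd hdd => ?_
            have hcard : dd.support.card ≤ D := by
              have h1 : dd.support.card ≤ dd.sum fun _ e => e := by
                rw [Finset.card_eq_sum_ones]
                exact Finset.sum_le_sum fun i hi =>
                  Nat.one_le_iff_ne_zero.mpr (Finsupp.mem_support_iff.mp hi)
              exact le_trans h1 (le_trans (MvPolynomial.le_totalDegree hdd) hp)
            rw [hS dd.support hcard, mul_zero]
    -- conclude
    have hlb : (D : ℝ≥0∞) + 1 ≤ orthE ζ := by
      rw [orthE]
      refine le_sInf fun z hz => ?_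
      obtain ⟨p, hdeg, hne⟩ := hz
      have hD : D < p.totalDegree := by
        by_contra h
        push_neg at h
        exact hne (hpoly p h)
      rw [← hdeg]
      have : ((D + 1 : ℕ) : ℝ≥0∞) ≤ (p.totalDegree : ℝ≥0∞) := Nat.cast_le.mpr (by omega)
      simpa using this
    calc (D : ℝ≥0∞) < (D : ℝ≥0∞) + 1 :=
          ENNReal.lt_add_right (by simp) one_ne_zero
      _ ≤ orthE ζ := hlb
end

section
/- Let B be a positive integer, Φ : {0,1}^B → ℝ a function, and T ≥ D ≥ 0 integers. Then there is a function Φ̃ : {0,1}^B → ℝ such that: (1) supp Φ̃ ⊆ {x ∈ {0,1}^B : |x| ≤ T}; (2) orth(Φ − Φ̃) > D; (3) ‖Φ − Φ̃‖₁ ≤ (1 + 2^D·binom(B,D)) · Σ_{x : |x| > T} |Φ(x)|. -/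
open scoped ENNReal

section KeyIdent
open Finset
lemma keyG (d : ℕ) : ∀ M : ℕ, d < M →
    ∑ j ∈ range (d+1), (-1:ℤ)^j * (M.choose j) * ((M-1-j).choose (d-j)) = (-1)^d := by
  induction d with
  | zero => intro M h; simp
  | succ d ih =>
    intro M h
    obtain ⟨N, rfl⟩ : ∃ N, M = N + 1 := ⟨M-1, by omega⟩
    rw [Finset.sum_range_succ']
    have h1 : ∀ i ∈ range (d+1),
        (-1:ℤ)^(i+1) * ((N+1).choose (i+1)) * ((N+1-1-(i+1)).choose (d+1-(i+1)))
        = -((-1:ℤ)^i * (N.choose i) * ((N-1-i).choose (d-i)))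
          + -((-1:ℤ)^i * ((N.choose (d+1)) * ((d+1).choose (i+1)))) := by
      intro i hi
      rw [mem_range] at hi
      have hc : (N+1).choose (i+1) = N.choose i + N.choose (i+1) := Nat.choose_succ_succ N i
      have h2 : N.choose (i+1) * (N-(i+1)).choose ((d+1)-(i+1)) =
          N.choose (d+1) * (d+1).choose (i+1) := by
        rw [← Nat.choose_mul (n := N) (by omega : i+1 ≤ d+1)]
      have e1 : N+1-1-(i+1) = N-1-i := by omega
      have e2 : d+1-(i+1) = d-i := by omega
      have e3 : N-(i+1) = N-1-i := by omega
      rw [e1, e2, hc]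
      rw [e3, e2] at h2
      have hbc : (N.choose (i+1) : ℤ) * ((N-1-i).choose (d-i)) =
          (N.choose (d+1)) * ((d+1).choose (i+1)) := by exact_mod_cast congrArg (Nat.cast (R := ℤ)) h2
      push_cast
      rw [pow_succ]
      linear_combination (-(-1:ℤ)^i) * hbc
    rw [Finset.sum_congr rfl h1, Finset.sum_add_distrib]
    have halt : ∑ i ∈ range (d+1), (-1:ℤ)^i * ((d+1).choose (i+1)) = 1 := by
      have h0 := Int.alternating_sum_range_choose (n := d+1)
      rw [Finset.sum_range_succ'] at h0
      simp only [if_neg (Nat.succ_ne_zero d)] at h0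
      have hh : ∀ i ∈ range (d+1), (-1:ℤ)^(i+1) * ((d+1).choose (i+1)) =
          -((-1:ℤ)^i * ((d+1).choose (i+1))) := by
        intro i _; rw [pow_succ]; ring
      rw [Finset.sum_congr rfl hh] at h0
      rw [Finset.sum_neg_distrib] at h0
      simp only [Nat.choose_zero_right, Nat.cast_one, pow_zero, one_mul] at h0
      linarith
    have hsum1 : ∑ i ∈ range (d+1), -((-1:ℤ)^i * (N.choose i) * ((N-1-i).choose (d-i)))
        = -(-1)^d := by
      rw [Finset.sum_neg_distrib, ih N (by omega)]
    have hsum2 : ∑ i ∈ range (d+1), -((-1:ℤ)^i * ((N.choose (d+1)) * ((d+1).choose (i+1))))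
        = -(N.choose (d+1)) := by
      rw [Finset.sum_neg_distrib]
      have : ∀ i ∈ range (d+1), (-1:ℤ)^i * ((N.choose (d+1)) * ((d+1).choose (i+1)))
          = (N.choose (d+1)) * ((-1:ℤ)^i * ((d+1).choose (i+1))) := by intro i _; ring
      rw [Finset.sum_congr rfl this, ← Finset.mul_sum, halt, mul_one]
    rw [hsum1, hsum2]
    simp only [pow_zero, one_mul, Nat.choose_zero_right, Nat.cast_one, mul_one,
      Nat.sub_zero, Nat.add_sub_cancel]
    ring

noncomputable def cc (D m k : ℕ) : ℝ := (-1)^(D-k+1) * ((m-k-1).choose (D-k))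

lemma neg_one_pow_sub {i d : ℕ} (h : i ≤ d) : ((-1:ℝ))^(d-i) = (-1)^d * (-1)^i := by
  have : d - i + 2 * i = d + i := by omega
  have h2 : ((-1:ℝ))^(d+i) = (-1)^(d-i) := by
    rw [← this, pow_add, pow_mul]; norm_num
  rw [pow_add] at h2
  exact h2.symm

lemma keyB {D m s : ℕ} (hsD : s ≤ D) (hDm : D < m) :
    ∑ j ∈ Finset.range (D - s + 1), ((m-s).choose j : ℝ) * cc D m (s + j) = -1 := by
  have hG := keyG (D - s) (m - s) (by omega)
  have hcast : ∑ j ∈ Finset.range (D-s+1),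
      ((-1:ℝ))^j * ((m-s).choose j) * (((m-s)-1-j).choose ((D-s)-j)) = (-1)^(D-s) := by
    exact_mod_cast hG
  have : ∀ j ∈ Finset.range (D-s+1), ((m-s).choose j : ℝ) * cc D m (s + j)
      = -((-1:ℝ)^(D-s) * ((-1:ℝ))^j * ((m-s).choose j) * (((m-s)-1-j).choose ((D-s)-j))) := by
    intro j hj
    rw [Finset.mem_range] at hj
    unfold cc
    have e1 : D - (s+j) = (D-s) - j := by omega
    have e2 : m - (s+j) - 1 = (m-s) - 1 - j := by omega
    rw [e1, e2, pow_succ, neg_one_pow_sub (by omega : j ≤ D - s)]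
    ring
  rw [Finset.sum_congr rfl this, Finset.sum_neg_distrib]
  have : ∀ j ∈ Finset.range (D-s+1),
      (-1:ℝ)^(D-s) * ((-1:ℝ))^j * ((m-s).choose j) * (((m-s)-1-j).choose ((D-s)-j))
      = (-1:ℝ)^(D-s) * (((-1:ℝ))^j * ((m-s).choose j) * (((m-s)-1-j).choose ((D-s)-j))) := by
    intro j _; ring
  rw [Finset.sum_congr rfl this, ← Finset.mul_sum, hcast, ← pow_add, ← two_mul, pow_mul]
  norm_num

noncomputable def zetaF (D : ℕ) {B : ℕ} (Z A : Finset (Fin B)) : ℝ :=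
  if A = Z then 1 else if A ⊆ Z ∧ A.card ≤ D then cc D Z.card A.card else 0

lemma zetaA {B D : ℕ} (Z S : Finset (Fin B)) (hZ : D < Z.card) (hS : S.card ≤ D) :
    ∑ A : Finset (Fin B), zetaF D Z A * (if S ⊆ A then 1 else 0) = 0 := by
  by_cases hSZ : S ⊆ Z
  case neg =>
    apply Finset.sum_eq_zero
    intro A _
    unfold zetaF
    by_cases h1 : A = Z
    · subst h1; rw [if_neg (fun h : S ⊆ A => hSZ h), mul_zero]
    · rw [if_neg h1]
      by_cases h2 : S ⊆ A
      · rw [if_neg, zero_mul]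
        rintro ⟨hAZ, -⟩
        exact hSZ (h2.trans hAZ)
      · rw [if_neg h2, mul_zero]
  case pos =>
    have key : ∀ A : Finset (Fin B), zetaF D Z A * (if S ⊆ A then 1 else 0)
        = (if A = Z then 1 else 0)
          + (if S ⊆ A ∧ A ⊆ Z ∧ A.card ≤ D then cc D Z.card A.card else 0) := by
      intro A
      unfold zetaF
      by_cases h1 : A = Z
      · subst h1
        rw [if_pos rfl, if_pos rfl, if_pos hSZ,
          if_neg (fun h => absurd h.2.2 (by omega)), one_mul]
        norm_num
      · rw [if_neg h1, if_neg h1]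
        by_cases h2 : S ⊆ A
        · rw [if_pos h2, mul_one, zero_add]
          by_cases h3 : A ⊆ Z ∧ A.card ≤ D
          · rw [if_pos h3, if_pos ⟨h2, h3⟩]
          · rw [if_neg h3, if_neg (fun h => h3 ⟨h.2.1, h.2.2⟩)]
        · rw [if_neg h2, mul_zero, zero_add,
            if_neg (fun h => h2 h.1)]
    rw [Finset.sum_congr rfl (fun A _ => key A), Finset.sum_add_distrib]
    have h1 : ∑ A : Finset (Fin B), (if A = Z then (1:ℝ) else 0) = 1 := by
      simp
    have h2 : ∑ A : Finset (Fin B), (if S ⊆ A ∧ A ⊆ Z ∧ A.card ≤ D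
        then cc D Z.card A.card else 0) = -1 := by
      rw [← Finset.sum_filter]
      have hbij : ∑ A ∈ Finset.univ.filter (fun A : Finset (Fin B) => S ⊆ A ∧ A ⊆ Z ∧ A.card ≤ D),
          cc D Z.card A.card
          = ∑ W ∈ (Z \ S).powerset.filter (fun W => S.card + W.card ≤ D),
            cc D Z.card (S.card + W.card) := by
        apply Finset.sum_bij' (i := fun A _ => A \ S) (j := fun W _ => S ∪ W)
        · intro A hA
          simp only [Finset.mem_filter, Finset.mem_univ, true_and] at hA
          simp only [Finset.mem_filter, Finset.mem_powerset]
          refine ⟨Finset.sdiff_subset_sdiff hA.2.1 (le_refl S), ?_⟩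
          rw [Finset.card_sdiff_of_subset hA.1]
          omega
        · intro W hW
          simp only [Finset.mem_filter, Finset.mem_powerset] at hW
          simp only [Finset.mem_filter, Finset.mem_univ, true_and]
          have hd : Disjoint S W := (Finset.subset_sdiff.mp hW.1).2.symm
          refine ⟨Finset.subset_union_left, ?_, ?_⟩
          · exact Finset.union_subset hSZ ((Finset.subset_sdiff.mp hW.1).1)
          · rw [Finset.card_union_of_disjoint hd]; exact hW.2
        · intro A hA
          simp only [Finset.mem_filter, Finset.mem_univ, true_and] at hA
          exact Finset.union_sdiff_of_subset hA.1
        · intro W hW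
          simp only [Finset.mem_filter, Finset.mem_powerset] at hW
          exact Finset.union_sdiff_cancel_left (Finset.subset_sdiff.mp hW.1).2.symm
        · intro A hA
          simp only [Finset.mem_filter, Finset.mem_univ, true_and] at hA
          congr 1
          rw [Finset.card_sdiff_of_subset hA.1]
          have := Finset.card_le_card hA.1
          omega
      rw [hbij, Finset.sum_filter]
      rw [Finset.sum_powerset_apply_card
        (f := fun j => if S.card + j ≤ D then cc D Z.card (S.card + j) else 0)]
      have hcard : (Z \ S).card = Z.card - S.card := Finset.card_sdiff_of_subset hSZ
      have hsub : Finset.range (D - S.card + 1) ⊆ Finset.range ((Z\S).card + 1) := by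
        apply Finset.range_subset_range.mpr
        have := Finset.card_le_card hSZ
        omega
      rw [← Finset.sum_subset hsub (by
        intro j hj hj2
        simp only [Finset.mem_range] at hj hj2
        rw [if_neg (by omega), smul_zero])]
      have heq : ∀ j ∈ Finset.range (D - S.card + 1),
          (Z\S).card.choose j • (if S.card + j ≤ D then cc D Z.card (S.card + j) else 0)
          = ((Z.card - S.card).choose j : ℝ) * cc D Z.card (S.card + j) := by
        intro j hj
        simp only [Finset.mem_range] at hj
        rw [if_pos (by omega), nsmul_eq_mul, hcard]
      rw [Finset.sum_congr rfl heq]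
      exact keyB hS hZ
    rw [h1, h2]
    norm_num

lemma choose_term_le {j D m B : ℕ} (hj : j ≤ D) (hDm : D < m) (hmB : m ≤ B) :
    m.choose j * ((m - j - 1).choose (D - j)) ≤ B.choose D * D.choose j := by
  calc m.choose j * ((m - j - 1).choose (D - j))
      ≤ m.choose j * ((m - j).choose (D - j)) :=
        Nat.mul_le_mul_left _ (Nat.choose_le_choose _ (by omega))
    _ = m.choose D * D.choose j := (Nat.choose_mul hj).symm
    _ ≤ B.choose D * D.choose j :=
        Nat.mul_le_mul_right _ (Nat.choose_le_choose _ hmB)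

lemma zetaC {B D : ℕ} (Z : Finset (Fin B)) (hZ : D < Z.card) :
    ∑ A : Finset (Fin B), |zetaF D Z A| ≤ 1 + 2^D * (B.choose D : ℝ) := by
  have hmB : Z.card ≤ B := by
    have := Finset.card_le_univ Z
    simpa using this
  have key : ∀ A : Finset (Fin B), |zetaF D Z A|
      = (if A = Z then 1 else 0)
        + (if A ⊆ Z ∧ A.card ≤ D then ((Z.card - A.card - 1).choose (D - A.card) : ℝ) else 0) := by
    intro A
    unfold zetaF
    by_cases h1 : A = Z
    · subst h1
      rw [if_pos rfl, if_pos rfl, if_neg (fun h => absurd h.2 (by omega))]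
      norm_num
    · rw [if_neg h1, if_neg h1, zero_add]
      by_cases h2 : A ⊆ Z ∧ A.card ≤ D
      · rw [if_pos h2, if_pos h2]
        unfold cc
        rw [abs_mul, abs_pow, abs_neg, abs_one, one_pow, one_mul, Nat.abs_cast]
      · rw [if_neg h2, if_neg h2, abs_zero]
  rw [Finset.sum_congr rfl (fun A _ => key A), Finset.sum_add_distrib]
  have h1 : ∑ A : Finset (Fin B), (if A = Z then (1:ℝ) else 0) = 1 := by simp
  rw [h1]
  have h2 : ∑ A : Finset (Fin B),
      (if A ⊆ Z ∧ A.card ≤ D then ((Z.card - A.card - 1).choose (D - A.card) : ℝ) else 0)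
      ≤ 2^D * (B.choose D : ℝ) := by
    have hps : ∑ A : Finset (Fin B),
        (if A ⊆ Z ∧ A.card ≤ D then ((Z.card - A.card - 1).choose (D - A.card) : ℝ) else 0)
        = ∑ A ∈ Z.powerset,
          (if A.card ≤ D then ((Z.card - A.card - 1).choose (D - A.card) : ℝ) else 0) := by
      rw [← Finset.sum_subset (Finset.subset_univ Z.powerset) (by
        intro A _ hA
        rw [Finset.mem_powerset] at hA
        rw [if_neg (fun h => hA h.1)])]
      apply Finset.sum_congr rfl
      intro A hA
      rw [Finset.mem_powerset] at hA
      by_cases h2 : A.card ≤ D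
      · rw [if_pos ⟨hA, h2⟩, if_pos h2]
      · rw [if_neg (fun h => h2 h.2), if_neg h2]
    rw [hps]
    rw [Finset.sum_powerset_apply_card
      (f := fun j => if j ≤ D then ((Z.card - j - 1).choose (D - j) : ℝ) else 0)]
    have hsub : Finset.range (D + 1) ⊆ Finset.range (Z.card + 1) := by
      apply Finset.range_subset_range.mpr; omega
    rw [← Finset.sum_subset hsub (by
      intro j hj hj2
      simp only [Finset.mem_range] at hj hj2
      rw [if_neg (by omega), smul_zero])]
    calc ∑ j ∈ Finset.range (D+1),
          Z.card.choose j • (if j ≤ D then ((Z.card - j - 1).choose (D - j) : ℝ) else 0)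
        = ∑ j ∈ Finset.range (D+1),
          ((Z.card.choose j * ((Z.card - j - 1).choose (D - j)) : ℕ) : ℝ) := by
          apply Finset.sum_congr rfl
          intro j hj
          simp only [Finset.mem_range] at hj
          rw [if_pos (by omega), nsmul_eq_mul]
          push_cast
          ring
      _ ≤ ∑ j ∈ Finset.range (D+1), ((B.choose D * D.choose j : ℕ) : ℝ) := by
          apply Finset.sum_le_sum
          intro j hj
          simp only [Finset.mem_range] at hj
          exact_mod_cast choose_term_le (by omega) hZ hmB
      _ = 2^D * (B.choose D : ℝ) := by
          push_cast
          rw [← Finset.mul_sum]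
          have := Nat.sum_range_choose D
          have h3 : ∑ j ∈ Finset.range (D+1), (D.choose j : ℝ) = 2^D := by
            exact_mod_cast congrArg (Nat.cast : ℕ → ℝ) this
          rw [h3]
          ring
  linarith

end KeyIdent
def bE (B : ℕ) : (Fin B → Bool) ≃ Finset (Fin B) where
  toFun x := Finset.univ.filter fun i => x i = true
  invFun A := fun i => decide (i ∈ A)
  left_inv x := by funext i; by_cases h : x i = true <;> simp [h]
  right_inv A := by ext i; simp

lemma mem_bE {B : ℕ} {x : Fin B → Bool} {i : Fin B} : i ∈ bE B x ↔ x i = true := by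
  simp [bE]

lemma hw_eq {B : ℕ} (x : Fin B → Bool) : hw x = (bE B x).card := rfl

lemma prod_breal {B : ℕ} (S : Finset (Fin B)) (x : Fin B → Bool) :
    ∏ i ∈ S, breal x i = if S ⊆ bE B x then 1 else 0 := by
  by_cases h : S ⊆ bE B x
  · rw [if_pos h]
    apply Finset.prod_eq_one
    intro i hi
    have := mem_bE.mp (h hi)
    simp [breal, this]
  · rw [if_neg h]
    obtain ⟨i, hiS, hix⟩ : ∃ i ∈ S, i ∉ bE B x := by
      by_contra hc; push_neg at hc; exact h hc
    apply Finset.prod_eq_zero hiS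
    rw [mem_bE] at hix
    simp only [Bool.not_eq_true] at hix
    simp [breal, hix]

lemma orth_of_monomials {B D : ℕ} (Ψ : (Fin B → Bool) → ℝ)
    (h : ∀ S : Finset (Fin B), S.card ≤ D →
      ∑ x : Fin B → Bool, Ψ x * (∏ i ∈ S, breal x i) = 0)
    (p : MvPolynomial (Fin B) ℝ) (hp : p.totalDegree ≤ D) :
    ∑ x : Fin B → Bool, Ψ x * MvPolynomial.eval (breal x) p = 0 := by
  have heval : ∀ x, MvPolynomial.eval (breal x) p
      = ∑ e ∈ p.support, p.coeff e * ∏ i ∈ e.support, breal x i := by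
    intro x
    rw [MvPolynomial.eval_eq]
    apply Finset.sum_congr rfl
    intro e _
    congr 1
    apply Finset.prod_congr rfl
    intro i hi
    rw [Finsupp.mem_support_iff] at hi
    unfold breal
    by_cases hx : x i <;> simp [hx, zero_pow hi]
  simp_rw [heval, Finset.mul_sum]
  rw [Finset.sum_comm]
  apply Finset.sum_eq_zero
  intro e he
  have hcard : e.support.card ≤ D := by
    have h1 : e.support.card ≤ e.sum (fun _ n => n) := by
      rw [Finsupp.sum, Finset.card_eq_sum_ones]
      apply Finset.sum_le_sum
      intro i hi
      rw [Finsupp.mem_support_iff] at hi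
      omega
    exact h1.trans ((MvPolynomial.le_totalDegree he).trans hp)
  have h0 := h e.support hcard
  calc ∑ x : Fin B → Bool, Ψ x * (p.coeff e * ∏ i ∈ e.support, breal x i)
      = p.coeff e * ∑ x : Fin B → Bool, Ψ x * ∏ i ∈ e.support, breal x i := by
        rw [Finset.mul_sum]
        apply Finset.sum_congr rfl
        intro x _
        ring
    _ = 0 := by rw [h0, mul_zero]

lemma orthE_gt {B D : ℕ} (Ψ : (Fin B → Bool) → ℝ)
    (h : ∀ p : MvPolynomial (Fin B) ℝ, p.totalDegree ≤ D →
      ∑ x : Fin B → Bool, Ψ x * MvPolynomial.eval (breal x) p = 0) :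
    (D : ℝ≥0∞) < orthE Ψ := by
  have hle : (D : ℝ≥0∞) + 1 ≤ orthE Ψ := by
    apply le_sInf
    rintro a ⟨p, hdeg, hne⟩
    have hD : D < p.totalDegree := by
      by_contra hc
      push_neg at hc
      exact hne (h p hc)
    rw [← hdeg]
    have h2 : ((D + 1 : ℕ) : ℝ≥0∞) ≤ (p.totalDegree : ℝ≥0∞) := by
      exact_mod_cast Nat.cast_le.mpr hD
    push_cast at h2
    exact h2
  calc (D : ℝ≥0∞) < D + 1 := ENNReal.lt_add_right (ENNReal.natCast_ne_top D) one_ne_zero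
    _ ≤ _ := hle


/-- Lemma 2.9 of the paper: zeroing out the high-Hamming-weight part of a dual object. -/
theorem zero_high_hamming_weight (B : ℕ) (hB : 0 < B)
    (Φ : (Fin B → Bool) → ℝ) (T D : ℕ) (hTD : D ≤ T) :
    ∃ Φ' : (Fin B → Bool) → ℝ,
      (∀ x, Φ' x ≠ 0 → hw x ≤ T) ∧
      (D : ℝ≥0∞) < orthE (fun x => Φ x - Φ' x) ∧
      (∑ x : Fin B → Bool, |Φ x - Φ' x|) ≤
        (1 + 2 ^ D * (B.choose D : ℝ)) *
          ∑ x ∈ Finset.univ.filter (fun x : Fin B → Bool => T < hw x), |Φ x| := by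
  classical
  set H : Finset (Fin B → Bool) := Finset.univ.filter (fun x : Fin B → Bool => T < hw x) with hH
  set Ψ : (Fin B → Bool) → ℝ := fun x => ∑ z ∈ H, Φ z * zetaF D (bE B z) (bE B x) with hΨ
  have hmemH : ∀ z : Fin B → Bool, z ∈ H ↔ T < hw z := by
    intro z; rw [hH, Finset.mem_filter]; simp
  have hcardH : ∀ z ∈ H, D < (bE B z).card := by
    intro z hz; rw [← hw_eq]; have := (hmemH z).mp hz; omega
  refine ⟨fun x => Φ x - Ψ x, ?_, ?_, ?_⟩
  · -- support
    intro x
    rw [not_imp_comm]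
    intro hx
    push_neg at hx
    have hxH : x ∈ H := (hmemH x).mpr hx
    have hz : ∀ z ∈ H, Φ z * zetaF D (bE B z) (bE B x) = if x = z then Φ x else 0 := by
      intro z hz
      by_cases hxz : x = z
      · subst hxz
        rw [if_pos rfl]
        unfold zetaF
        rw [if_pos rfl, mul_one]
      · have hne : bE B x ≠ bE B z := fun h => hxz ((bE B).injective h)
        rw [if_neg hxz]
        unfold zetaF
        rw [if_neg hne, if_neg (fun h => absurd h.2 (by rw [← hw_eq]; omega)), mul_zero]
    rw [hΨ]
    simp only
    rw [Finset.sum_congr rfl hz, Finset.sum_ite_eq H x (fun _ => Φ x), if_pos hxH]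
    ring
  · -- orthogonality
    have hsub : (fun x => Φ x - (Φ x - Ψ x)) = Ψ := by funext x; ring
    rw [hsub]
    apply orthE_gt
    intro p hp
    refine orth_of_monomials _ ?_ p hp
    intro S hS
    have hx : ∀ x : Fin B → Bool, Ψ x * (∏ i ∈ S, breal x i)
        = ∑ z ∈ H, Φ z * (zetaF D (bE B z) (bE B x) * (if S ⊆ bE B x then 1 else 0)) := by
      intro x
      rw [prod_breal, hΨ]
      simp only
      rw [Finset.sum_mul]
      apply Finset.sum_congr rfl
      intro z _
      ring
    rw [Finset.sum_congr rfl (fun x _ => hx x), Finset.sum_comm]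
    apply Finset.sum_eq_zero
    intro z hz
    rw [← Finset.mul_sum]
    have htrans : ∑ x : Fin B → Bool,
        zetaF D (bE B z) (bE B x) * (if S ⊆ bE B x then 1 else 0)
        = ∑ A : Finset (Fin B), zetaF D (bE B z) A * (if S ⊆ A then 1 else 0) :=
      Fintype.sum_equiv (bE B) _ _ (fun x => rfl)
    rw [htrans, zetaA _ _ (hcardH z hz) hS, mul_zero]
  · -- norm bound
    have hsub : ∀ x, Φ x - (Φ x - Ψ x) = Ψ x := by intro x; ring
    simp only [hsub]
    have hC : (0:ℝ) ≤ 1 + 2 ^ D * (B.choose D : ℝ) := by positivity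
    calc ∑ x : Fin B → Bool, |Ψ x|
        ≤ ∑ x : Fin B → Bool, ∑ z ∈ H, |Φ z * zetaF D (bE B z) (bE B x)| := by
          apply Finset.sum_le_sum
          intro x _
          exact Finset.abs_sum_le_sum_abs _ _
      _ = ∑ z ∈ H, |Φ z| * ∑ x : Fin B → Bool, |zetaF D (bE B z) (bE B x)| := by
          rw [Finset.sum_comm]
          apply Finset.sum_congr rfl
          intro z _
          rw [Finset.mul_sum]
          apply Finset.sum_congr rfl
          intro x _
          rw [abs_mul]
      _ ≤ ∑ z ∈ H, |Φ z| * (1 + 2 ^ D * (B.choose D : ℝ)) := by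
          apply Finset.sum_le_sum
          intro z hz
          apply mul_le_mul_of_nonneg_left _ (abs_nonneg _)
          have htrans : ∑ x : Fin B → Bool, |zetaF D (bE B z) (bE B x)|
              = ∑ A : Finset (Fin B), |zetaF D (bE B z) A| :=
            Fintype.sum_equiv (bE B) _ _ (fun x => rfl)
          rw [htrans]
          exact zetaC _ (hcardH z hz)
      _ = (1 + 2 ^ D * (B.choose D : ℝ)) * ∑ z ∈ H, |Φ z| := by
          rw [Finset.mul_sum]
          apply Finset.sum_congr rfl
          intro z _
          ring
end

section
/- Let n, k, θ, D, T be positive integers with T ≥ n + D and T ≥ θk. Let y = (y_1, …, y_θ) ∈ ({0,1}^n)^θ with total Hamming weight |y| > T. Then there exists a function ζ_y : ({0,1}^n)^θ → ℝ such that: (1) supp ζ_y ⊆ {x : |x| ≤ T} ∪ {y}; (2) ζ_y(y) = 1; (3) orth(ζ_y) > D; (4) ‖ζ_y‖₁ ≤ 1 + 2^D·binom(n(θ−1), D); (5) ζ_y(x) = 0 whenever x = (x_1, …, x_θ) satisfies |x_i| ≤ k for every i ∈ {1, …, θ}. -/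
open scoped ENNReal

open Finset
lemma altsum (m : ℕ) : ∀ R : ℕ, ∑ r ∈ range (R+1), (-1:ℝ)^r * ((m+1).choose r) = (-1)^R * (m.choose R)
  | 0 => by simp
  | (R+1) => by
    rw [Finset.sum_range_succ, altsum m R, Nat.choose_succ_succ' m R]
    push_cast
    ring

/-- triangular double sum swap -/
lemma tri_swap (f : ℕ → ℕ → ℝ) : ∀ R : ℕ,
    ∑ t ∈ range (R+1), ∑ r ∈ range (R+1-t), f t r
      = ∑ l ∈ range (R+1), ∑ t ∈ range (l+1), f t (l-t)
  | 0 => by simp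
  | (R+1) => by
    have h1 : ∀ t ∈ range (R+1), ∑ r ∈ range (R+1+1-t), f t r
        = (∑ r ∈ range (R+1-t), f t r) + f t (R+1-t) := by
      intro t ht
      rw [mem_range] at ht
      have h2 : R+1+1-t = (R+1-t)+1 := by omega
      rw [h2, Finset.sum_range_succ]
    have h3 : R+1+1-(R+1) = 1 := by omega
    have h4 : R+1-(R+1) = 0 := by omega
    calc ∑ t ∈ range (R+1+1), ∑ r ∈ range (R+1+1-t), f t r
        = (∑ t ∈ range (R+1), ∑ r ∈ range (R+1+1-t), f t r) + ∑ r ∈ range (R+1+1-(R+1)), f (R+1) r := by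
          rw [Finset.sum_range_succ]
      _ = (∑ t ∈ range (R+1), ((∑ r ∈ range (R+1-t), f t r) + f t (R+1-t))) + f (R+1) 0 := by
          rw [Finset.sum_congr rfl h1, h3, Finset.sum_range_one]
      _ = (∑ t ∈ range (R+1), ∑ r ∈ range (R+1-t), f t r) + ∑ t ∈ range (R+1+1), f t (R+1-t) := by
          rw [Finset.sum_add_distrib, Finset.sum_range_succ (fun t => f t (R+1-t)) (R+1), h4]
          ring
      _ = (∑ l ∈ range (R+1), ∑ t ∈ range (l+1), f t (l-t)) + ∑ t ∈ range (R+1+1), f t (R+1-t) := by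
          rw [tri_swap f R]
      _ = _ := by
          rw [Finset.sum_range_succ (fun l => ∑ t ∈ range (l+1), f t (l-t)) (R+1)]

/-- the orthogonality identity -/
lemma orth_id (m R : ℕ) (hRm : R ≤ m) :
    ∑ t ∈ range (R+1), ((m+1).choose t : ℝ) * ((-1)^(R-t) * ((m-t).choose (R-t))) = 1 := by
  have key : ∀ t ∈ range (R+1), ((m+1).choose t : ℝ) * ((-1)^(R-t) * ((m-t).choose (R-t)))
      = ∑ r ∈ range (R+1-t), (-1:ℝ)^r * (((m+1).choose t : ℝ) * ((m+1-t).choose r)) := by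
    intro t ht
    rw [mem_range] at ht
    have h1 : m - t + 1 = m + 1 - t := by omega
    have halt := altsum (m-t) (R-t)
    rw [h1] at halt
    have h2 : R + 1 - t = (R-t)+1 := by omega
    have h5 : ∀ r : ℕ, (-1:ℝ)^r * (((m+1).choose t : ℝ) * ((m+1-t).choose r))
        = ((m+1).choose t : ℝ) * ((-1:ℝ)^r * ((m+1-t).choose r)) := fun r => by ring
    rw [h2]
    simp_rw [h5]
    rw [← Finset.mul_sum, halt]
  rw [Finset.sum_congr rfl key, tri_swap]
  have inner : ∀ l ∈ range (R+1), (∑ t ∈ range (l+1), (-1:ℝ)^(l-t) * (((m+1).choose t : ℝ) * ((m+1-t).choose (l-t))))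
      = (if l = 0 then 1 else 0) := by
    intro l hl
    rw [mem_range] at hl
    have tri : ∀ t ∈ range (l+1), (-1:ℝ)^(l-t) * (((m+1).choose t : ℝ) * ((m+1-t).choose (l-t)))
        = ((m+1).choose l : ℝ) * ((-1)^(l-t) * (l.choose t)) := by
      intro t ht
      rw [mem_range] at ht
      have hc := Nat.choose_mul (n := m+1) (k := l) (s := t) (by omega)
      have hc' : (((m+1).choose t : ℝ) * ((m+1-t).choose (l-t))) = ((m+1).choose l : ℝ) * (l.choose t) := by
        exact_mod_cast congrArg (Nat.cast (R := ℝ)) hc.symm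
      rw [hc']; ring
    rw [Finset.sum_congr rfl tri, ← Finset.mul_sum]
    have hrefl : ∑ t ∈ range (l+1), (-1:ℝ)^(l-t) * (l.choose t)
        = ∑ t ∈ range (l+1), (-1:ℝ)^t * (l.choose t) := by
      rw [← Finset.sum_range_reflect (fun t => (-1:ℝ)^t * (l.choose t)) (l+1)]
      apply Finset.sum_congr rfl
      intro t ht
      rw [mem_range] at ht
      have h6 : l + 1 - 1 - t = l - t := by omega
      rw [h6, Nat.choose_symm (by omega : t ≤ l)]
    rw [hrefl]
    have hcast : ∑ t ∈ range (l+1), (-1:ℝ)^t * (l.choose t)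
        = ((∑ t ∈ range (l+1), (-1:ℤ)^t * (l.choose t) : ℤ) : ℝ) := by push_cast; rfl
    rw [hcast, Int.alternating_sum_range_choose]
    by_cases hl0 : l = 0 <;> simp [hl0]
  rw [Finset.sum_congr rfl inner]
  simp

/-- the norm identity -/
lemma norm_id (w D : ℕ) (hDw : D ≤ w) :
    ∑ s ∈ range (D+1), (w.choose s : ℝ) * ((w-s-1).choose (D-s)) ≤ 2^D * (w.choose D) := by
  have step : ∀ s ∈ range (D+1), (w.choose s : ℝ) * ((w-s-1).choose (D-s))
      ≤ (w.choose D : ℝ) * (D.choose s) := by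
    intro s hs
    rw [mem_range] at hs
    have h1 : ((w-s-1).choose (D-s)) ≤ ((w-s).choose (D-s)) := Nat.choose_le_choose _ (by omega)
    have h2 : w.choose s * ((w-s).choose (D-s)) = w.choose D * D.choose s :=
      (Nat.choose_mul (by omega)).symm
    calc (w.choose s : ℝ) * ((w-s-1).choose (D-s)) ≤ (w.choose s : ℝ) * ((w-s).choose (D-s)) := by
          apply mul_le_mul_of_nonneg_left (by exact_mod_cast h1) (by positivity)
      _ = (w.choose D : ℝ) * (D.choose s) := by exact_mod_cast h2
  calc ∑ s ∈ range (D+1), (w.choose s : ℝ) * ((w-s-1).choose (D-s))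
      ≤ ∑ s ∈ range (D+1), (w.choose D : ℝ) * (D.choose s) := Finset.sum_le_sum step
    _ = (w.choose D : ℝ) * ∑ s ∈ range (D+1), (D.choose s : ℝ) := by rw [Finset.mul_sum]
    _ = (w.choose D : ℝ) * 2^D := by
        norm_cast
        rw [Nat.sum_range_choose]
    _ = 2^D * (w.choose D) := by ring

lemma sum_powerset_filter_card {α : Type*} [DecidableEq α] (C : Finset α) (R : ℕ) (f : ℕ → ℝ) :
    ∑ u ∈ C.powerset.filter (fun u => u.card ≤ R), f u.card
      = ∑ t ∈ range (R+1), (C.card.choose t : ℝ) * f t := by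
  have hset : C.powerset.filter (fun u => u.card ≤ R)
      = (range (R+1)).biUnion (fun t => C.powersetCard t) := by
    ext u
    simp only [mem_filter, mem_powerset, mem_biUnion, mem_range, Finset.mem_powersetCard]
    constructor
    · rintro ⟨h1, h2⟩; exact ⟨u.card, by omega, h1, rfl⟩
    · rintro ⟨t, ht, h1, h2⟩; exact ⟨h1, by omega⟩
  rw [hset, Finset.sum_biUnion]
  · apply Finset.sum_congr rfl
    intro t _
    have hcc : ∀ u ∈ C.powersetCard t, f u.card = f t := by
      intro u hu
      rw [(Finset.mem_powersetCard.mp hu).2]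
    rw [Finset.sum_congr rfl hcc, Finset.sum_const, Finset.card_powersetCard, nsmul_eq_mul]
  · intro s _ t _ hst
    simp only [Function.onFun]
    rw [Finset.disjoint_left]
    intro u hu1 hu2
    rw [Finset.mem_powersetCard] at hu1 hu2
    exact hst (hu1.2 ▸ hu2.2.symm ▸ rfl)

lemma eval_mon {ι : Type*} [Fintype ι] [DecidableEq ι] (x : ι → Bool) (d : ι →₀ ℕ) (c : ℝ) :
    MvPolynomial.eval (breal x) (MvPolynomial.monomial d c)
      = c * (if ∀ i ∈ d.support, x i = true then 1 else 0) := by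
  rw [MvPolynomial.eval_monomial]
  congr 1
  rw [Finsupp.prod]
  split
  · next h =>
    apply Finset.prod_eq_one
    intro i hi
    have hx : x i = true := h i hi
    simp [breal, hx]
  · next h =>
    push_neg at h
    obtain ⟨i0, hi0, hxi0⟩ := h
    apply Finset.prod_eq_zero hi0
    have hd : d i0 ≠ 0 := Finsupp.mem_support_iff.mp hi0
    have hb0 : breal x i0 = 0 := by simp [breal, hxi0]
    rw [hb0, zero_pow hd]

lemma delta_sum {ι : Type*} [Fintype ι] [DecidableEq ι] (z : ι → Bool) (g : (ι → Bool) → ℝ) :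
    ∑ x : ι → Bool, (if x = z then (1:ℝ) else 0) * g x = g z := by
  rw [Finset.sum_eq_single z]
  · simp
  · intro b _ hb; simp [hb]
  · intro h; exact absurd (Finset.mem_univ z) h

/-- pairing a delta-combination with an arbitrary function -/
lemma pair_sum {ι β : Type*} [Fintype ι] [DecidableEq ι]
    (z : ι → Bool) (s : Finset β) (cf : β → ℝ) (ptf : β → (ι → Bool)) (g : (ι → Bool) → ℝ) :
    ∑ x : ι → Bool, ((if x = z then (1:ℝ) else 0) + ∑ u ∈ s, cf u * (if x = ptf u then 1 else 0)) * g x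
      = g z + ∑ u ∈ s, cf u * g (ptf u) := by
  simp_rw [add_mul, Finset.sum_add_distrib]
  rw [delta_sum]
  congr 1
  simp_rw [Finset.sum_mul]
  rw [Finset.sum_comm]
  apply Finset.sum_congr rfl
  intro u _
  simp_rw [mul_assoc]
  rw [← Finset.mul_sum, delta_sum (ptf u) g]

/-- Lemma 4.13 of the paper: a corrector object for block-structured inputs. -/
theorem corrector_for_blocks (n k θ D T : ℕ)
    (hn : 0 < n) (hk : 0 < k) (hθ : 0 < θ) (hD : 0 < D) (hT : 0 < T)
    (hTnD : n + D ≤ T) (hTθk : θ * k ≤ T)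
    (y : Fin θ × Fin n → Bool) (hy : T < hw y) :
    ∃ ζ : (Fin θ × Fin n → Bool) → ℝ,
      (∀ x, ζ x ≠ 0 → hw x ≤ T ∨ x = y) ∧
      ζ y = 1 ∧
      (D : ℝ≥0∞) < orthE ζ ∧
      (∑ x : Fin θ × Fin n → Bool, |ζ x|) ≤ 1 + 2 ^ D * ((n * (θ - 1)).choose D : ℝ) ∧
      (∀ x : Fin θ × Fin n → Bool,
        (∀ i : Fin θ, hw (fun j : Fin n => x (i, j)) ≤ k) → ζ x = 0) := by
  classical
  -- hw decomposes as a sum over blocks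
  have hw_sum : ∀ x : Fin θ × Fin n → Bool, hw x = ∑ i : Fin θ, hw (fun j => x (i,j)) := by
    intro x
    rw [hw, Finset.card_filter, Fintype.sum_prod_type]
    apply Finset.sum_congr rfl
    intro i _
    rw [hw, Finset.card_filter]
  -- pick a heavy block
  obtain ⟨ist, hist⟩ : ∃ i : Fin θ, k < hw (fun j => y (i,j)) := by
    by_contra h
    push_neg at h
    have hle : hw y ≤ θ * k := by
      rw [hw_sum y]
      calc ∑ i, hw (fun j => y (i,j)) ≤ ∑ _i : Fin θ, k :=
            Finset.sum_le_sum (fun i _ => h i)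
        _ = θ * k := by simp [Finset.sum_const, Finset.card_univ]
    omega
  set A : Finset (Fin θ × Fin n) := univ.filter (fun c => y c = true ∧ c.1 = ist) with hA
  set B : Finset (Fin θ × Fin n) := univ.filter (fun c => y c = true ∧ c.1 ≠ ist) with hB
  -- a = A.card equals weight of block ist
  have habw : A.card = hw (fun j => y (ist, j)) := by
    rw [hw]
    apply Finset.card_bij' (fun (c : Fin θ × Fin n) _ => c.2) (fun j _ => (ist, j))
    · intro c hc
      simp only [hA, mem_filter, mem_univ, true_and] at hc
      simp only [mem_filter, mem_univ, true_and]
      rw [← hc.2]; exact hc.1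
    · intro j hj
      simp only [mem_filter, mem_univ, true_and] at hj
      simp [hA, hj]
    · intro c hc
      simp only [hA, mem_filter, mem_univ, true_and] at hc
      exact Prod.ext hc.2.symm rfl
    · intro j _
      rfl
  have han : A.card ≤ n := by
    rw [habw, hw]
    calc (univ.filter fun j => y (ist, j) = true).card ≤ (univ : Finset (Fin n)).card :=
          Finset.card_filter_le _ _
      _ = n := by simp
  have hsplit : hw y = A.card + B.card := by
    rw [hw, ← Finset.card_filter_add_card_filter_not (p := fun c => c.1 = ist)
      (s := univ.filter (fun c => y c = true))]
    congr 1 <;> rw [Finset.filter_filter]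
  have hka : k < A.card := by rw [habw]; exact hist
  have hwD : D < B.card := by omega
  have hwm : B.card ≤ n * (θ - 1) := by
    have hsub : B ⊆ (univ.erase ist) ×ˢ (univ : Finset (Fin n)) := by
      intro c hc
      simp only [hB, mem_filter, mem_univ, true_and] at hc
      rw [Finset.mem_product]
      exact ⟨Finset.mem_erase.mpr ⟨hc.2, Finset.mem_univ _⟩, Finset.mem_univ _⟩
    calc B.card ≤ ((univ.erase ist) ×ˢ (univ : Finset (Fin n))).card := Finset.card_le_card hsub
      _ = (θ - 1) * n := by
          rw [Finset.card_product, Finset.card_erase_of_mem (Finset.mem_univ _)]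
          simp
      _ = n * (θ - 1) := Nat.mul_comm _ _
  set w := B.card with hwdef
  set aa : ℕ → ℝ := fun s => (-1)^(D - s + 1) * (((w - s - 1).choose (D - s) : ℕ) : ℝ) with haa
  set U : Finset (Finset (Fin θ × Fin n)) := B.powerset.filter (fun u => u.card ≤ D) with hUdef
  set pt : Finset (Fin θ × Fin n) → (Fin θ × Fin n → Bool) :=
    fun u c => if c.1 = ist then y c else decide (c ∈ u) with hpt
  have hUmem : ∀ u ∈ U, u ⊆ B ∧ u.card ≤ D := by
    intro u hu
    rw [hUdef, mem_filter, mem_powerset] at hu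
    exact hu
  -- block ist of pt u equals block ist of y
  have hptblock : ∀ u, (fun j => pt u (ist, j)) = (fun j => y (ist, j)) := by
    intro u
    funext j
    simp [hpt]
  -- pt u differs from y
  have hptne : ∀ u ∈ U, pt u ≠ y := by
    intro u hu
    obtain ⟨huB, huD⟩ := hUmem u hu
    have hcard : u.card < B.card := lt_of_le_of_lt huD hwD
    obtain ⟨c, hcB, hcu⟩ : ∃ c ∈ B, c ∉ u := by
      by_contra h
      push_neg at h
      exact absurd (Finset.card_le_card h) (not_le.mpr hcard)
    intro heq
    simp only [hB, mem_filter, mem_univ, true_and] at hcB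
    have : pt u c = y c := congrFun heq c
    simp only [hpt] at this
    simp only [if_neg hcB.2] at this
    rw [hcB.1] at this
    simp [hcu] at this
  -- hamming weight of pt u
  have hhwpt : ∀ u ∈ U, hw (pt u) = A.card + u.card := by
    intro u hu
    obtain ⟨huB, huD⟩ := hUmem u hu
    have hset : (univ.filter fun c => pt u c = true) = A ∪ u := by
      ext c
      simp only [mem_filter, mem_univ, true_and, Finset.mem_union, hA, hpt]
      by_cases hc : c.1 = ist
      · rw [if_pos hc]
        constructor
        · intro hyc; exact Or.inl ⟨hyc, hc⟩
        · rintro (⟨hyc, _⟩ | hcu)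
          · exact hyc
          · have := huB hcu
            simp only [hB, mem_filter, mem_univ, true_and] at this
            exact absurd hc this.2
      · rw [if_neg hc]
        simp only [decide_eq_true_eq]
        constructor
        · intro hcu; exact Or.inr hcu
        · rintro (⟨_, hcs⟩ | hcu)
          · exact absurd hcs hc
          · exact hcu
    have hdisj : Disjoint A u := by
      rw [Finset.disjoint_left]
      intro c hcA hcu
      simp only [hA, mem_filter, mem_univ, true_and] at hcA
      have := huB hcu
      simp only [hB, mem_filter, mem_univ, true_and] at this
      exact this.2 hcA.2
    rw [hw, hset, Finset.card_union_of_disjoint hdisj]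
  refine ⟨fun x => (if x = y then (1:ℝ) else 0) + ∑ u ∈ U, aa u.card * (if x = pt u then 1 else 0),
    ?_, ?_, ?_, ?_, ?_⟩
  all_goals beta_reduce
  · -- support
    intro x hx
    beta_reduce at hx
    by_cases hxy : x = y
    · exact Or.inr hxy
    by_cases hxT : hw x ≤ T
    · exact Or.inl hxT
    exfalso
    apply hx
    rw [if_neg hxy, zero_add]
    apply Finset.sum_eq_zero
    intro u hu
    have : x ≠ pt u := by
      intro heq
      rw [heq] at hxT
      have := hhwpt u hu
      have hcard := (hUmem u hu).2
      omega
    rw [if_neg this, mul_zero]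
  · -- value at y
    rw [if_pos rfl]
    have : ∀ u ∈ U, aa u.card * (if y = pt u then (1:ℝ) else 0) = 0 := by
      intro u hu
      rw [if_neg (fun h => hptne u hu h.symm), mul_zero]
    rw [Finset.sum_eq_zero this, add_zero]
  · -- orthogonality
    -- key combinatorial identity
    have key : ∀ S : Finset (Fin θ × Fin n), S.card ≤ D →
        (if ∀ c ∈ S, y c = true then (1:ℝ) else 0)
          + ∑ u ∈ U, aa u.card * (if ∀ c ∈ S, pt u c = true then 1 else 0) = 0 := by
      intro S hSD
      by_cases hSy : ∀ c ∈ S, y c = true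
      · -- case B
        rw [if_pos hSy]
        set S' : Finset (Fin θ × Fin n) := S.filter (fun c => c.1 ≠ ist) with hS'
        have hS'B : S' ⊆ B := by
          intro c hc
          rw [hS', mem_filter] at hc
          simp only [hB, mem_filter, mem_univ, true_and]
          exact ⟨hSy c hc.1, hc.2⟩
        have hs'le : S'.card ≤ D := le_trans (Finset.card_filter_le _ _) hSD
        have hs'w : S'.card ≤ w := le_trans (Finset.card_le_card hS'B) le_rfl
        have hind : ∀ u ∈ U, (if ∀ c ∈ S, pt u c = true then (1:ℝ) else 0)
            = if S' ⊆ u then 1 else 0 := by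
          intro u hu
          obtain ⟨huB, _⟩ := hUmem u hu
          congr 1
          rw [eq_iff_iff]
          constructor
          · intro h c hc
            rw [hS', mem_filter] at hc
            have := h c hc.1
            simp only [hpt] at this
            simp only [if_neg hc.2, decide_eq_true_eq] at this
            exact this
          · intro h c hc
            simp only [hpt]
            by_cases hcist : c.1 = ist
            · rw [if_pos hcist]; exact hSy c hc
            · rw [if_neg hcist]
              simp only [decide_eq_true_eq]
              exact h (by rw [hS', mem_filter]; exact ⟨hc, hcist⟩)
        rw [Finset.sum_congr rfl (fun u hu => by rw [hind u hu])]
        have hfilter : ∑ u ∈ U, aa u.card * (if S' ⊆ u then (1:ℝ) else 0)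
            = ∑ u ∈ U.filter (fun u => S' ⊆ u), aa u.card := by
          rw [Finset.sum_filter (fun u => S' ⊆ u) (fun u => aa u.card)]
          apply Finset.sum_congr rfl
          intro u _
          rw [mul_ite, mul_one, mul_zero]
        rw [hfilter]
        -- reindex by u ↦ u \ S'
        have hbij : ∑ u ∈ U.filter (fun u => S' ⊆ u), aa u.card
            = ∑ v ∈ (B \ S').powerset.filter (fun v => v.card ≤ D - S'.card), aa (v.card + S'.card) := by
          apply Finset.sum_nbij' (i := fun u => u \ S') (j := fun v => v ∪ S')
          · intro u hu
            rw [mem_filter] at hu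
            obtain ⟨hu1, hu2⟩ := hu
            obtain ⟨huB, huD⟩ := hUmem u hu1
            rw [mem_filter, mem_powerset]
            constructor
            · exact Finset.sdiff_subset_sdiff huB le_rfl
            · rw [Finset.card_sdiff_of_subset hu2]; omega
          · intro v hv
            rw [mem_filter, mem_powerset] at hv
            obtain ⟨hv1, hv2⟩ := hv
            rw [mem_filter]
            constructor
            · rw [hUdef, mem_filter, mem_powerset]
              constructor
              · apply Finset.union_subset
                · exact le_trans hv1 (Finset.sdiff_subset)
                · exact hS'B
              · have hdisj : Disjoint v S' := by
                  apply Finset.disjoint_of_subset_left hv1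
                  exact Finset.sdiff_disjoint
                rw [Finset.card_union_of_disjoint hdisj]
                omega
            · exact Finset.subset_union_right
          · intro u hu
            rw [mem_filter] at hu
            exact Finset.sdiff_union_of_subset hu.2
          · intro v hv
            rw [mem_filter, mem_powerset] at hv
            apply Finset.union_sdiff_cancel_right
            apply Finset.disjoint_of_subset_left hv.1
            exact Finset.sdiff_disjoint
          · intro u hu
            rw [mem_filter] at hu
            obtain ⟨hu1, hu2⟩ := hu
            congr 1
            rw [Finset.card_sdiff_of_subset hu2]
            have := Finset.card_le_card hu2
            omega
        rw [hbij]
        have hcardBS : (B \ S').card = w - S'.card := by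
          rw [Finset.card_sdiff_of_subset hS'B]
        rw [sum_powerset_filter_card (B \ S') (D - S'.card) (fun t => aa (t + S'.card)), hcardBS]
        -- apply orth_id with m' = w - S'.card - 1, R' = D - S'.card
        set s' := S'.card with hs'def
        set m' := w - s' - 1 with hm'
        set R' := D - s' with hR'
        have hwM : w - s' = m' + 1 := by omega
        have hRm' : R' ≤ m' := by omega
        have hsummand : ∀ t ∈ range (R'+1),
            ((w - s').choose t : ℝ) * aa (t + s')
              = -(((m'+1).choose t : ℝ) * ((-1)^(R'-t) * ((m'-t).choose (R'-t)))) := by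
          intro t ht
          rw [mem_range] at ht
          have e1 : D - (t + s') = R' - t := by omega
          have e2 : w - (t + s') - 1 = m' - t := by omega
          rw [haa]
          simp only []
          rw [e1, e2, hwM, pow_succ]
          ring
        rw [Finset.sum_congr rfl hsummand, Finset.sum_neg_distrib, orth_id m' R' hRm']
        ring
      · -- case A: some coordinate of S is 0 in y
        rw [if_neg hSy]
        push_neg at hSy
        obtain ⟨c0, hc0S, hc0y⟩ := hSy
        rw [zero_add]
        apply Finset.sum_eq_zero
        intro u hu
        obtain ⟨huB, _⟩ := hUmem u hu
        have : ¬ (∀ c ∈ S, pt u c = true) := by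
          intro h
          have := h c0 hc0S
          simp only [hpt] at this
          by_cases hc : c0.1 = ist
          · rw [if_pos hc] at this; rw [this] at hc0y; exact hc0y rfl
          · rw [if_neg hc] at this
            simp only [decide_eq_true_eq] at this
            have := huB this
            simp only [hB, mem_filter, mem_univ, true_and] at this
            rw [this.1] at hc0y; exact hc0y rfl
        rw [if_neg this, mul_zero]
    -- now show orthE > D
    have horthset : ∀ d ∈ {d : ℝ≥0∞ | ∃ p : MvPolynomial (Fin θ × Fin n) ℝ,
        (p.totalDegree : ℝ≥0∞) = d ∧
        (∑ x : Fin θ × Fin n → Bool,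
          ((if x = y then (1:ℝ) else 0) + ∑ u ∈ U, aa u.card * (if x = pt u then 1 else 0))
            * MvPolynomial.eval (breal x) p) ≠ 0}, ((D:ℝ≥0∞) + 1) ≤ d := by
      rintro d ⟨p, hpd, hpne⟩
      have hdeg : D < p.totalDegree := by
        by_contra hc
        push_neg at hc
        apply hpne
        have heval : ∀ x : Fin θ × Fin n → Bool, MvPolynomial.eval (breal x) p
            = ∑ e ∈ p.support, MvPolynomial.coeff e p
                * (if ∀ i ∈ e.support, x i = true then 1 else 0) := by
          intro x
          conv_lhs => rw [MvPolynomial.as_sum p]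
          rw [map_sum]
          apply Finset.sum_congr rfl
          intro e _
          exact eval_mon x e _
        simp_rw [heval]
        simp_rw [Finset.mul_sum]
        rw [Finset.sum_comm]
        apply Finset.sum_eq_zero
        intro e he
        have hecard : e.support.card ≤ D := by
          have h1 : e.support.card ≤ e.sum (fun _ m => m) := by
            rw [Finsupp.sum]
            calc e.support.card = ∑ i ∈ e.support, 1 := by rw [Finset.card_eq_sum_ones]
              _ ≤ ∑ i ∈ e.support, e i := by
                  apply Finset.sum_le_sum
                  intro i hi
                  exact Nat.one_le_iff_ne_zero.mpr (Finsupp.mem_support_iff.mp hi)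
          have h2 : e.sum (fun _ m => m) ≤ p.totalDegree := MvPolynomial.le_totalDegree he
          omega
        have := key e.support hecard
        have hform : ∀ x : Fin θ × Fin n → Bool,
            ((if x = y then (1:ℝ) else 0) + ∑ u ∈ U, aa u.card * (if x = pt u then 1 else 0))
              * (MvPolynomial.coeff e p * (if ∀ i ∈ e.support, x i = true then 1 else 0))
            = MvPolynomial.coeff e p *
              (((if x = y then (1:ℝ) else 0) + ∑ u ∈ U, aa u.card * (if x = pt u then 1 else 0))
                * (if ∀ i ∈ e.support, x i = true then 1 else 0)) := by
          intro x; ring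
        rw [Finset.sum_congr rfl (fun x _ => hform x), ← Finset.mul_sum]
        rw [pair_sum y U (fun u => aa u.card) pt (fun x => if ∀ i ∈ e.support, x i = true then 1 else 0)]
        rw [this, mul_zero]
      rw [← hpd]
      have : (D:ℕ) + 1 ≤ p.totalDegree := hdeg
      calc (D:ℝ≥0∞) + 1 = ((D + 1 : ℕ) : ℝ≥0∞) := by push_cast; ring
        _ ≤ (p.totalDegree : ℝ≥0∞) := by exact_mod_cast this
    calc (D:ℝ≥0∞) < (D:ℝ≥0∞) + 1 := by
          apply ENNReal.lt_add_right
          · exact ENNReal.natCast_ne_top D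
          · exact one_ne_zero
      _ ≤ orthE _ := le_sInf horthset
  · -- L1 norm
    have hbound : ∀ x : Fin θ × Fin n → Bool,
        |(if x = y then (1:ℝ) else 0) + ∑ u ∈ U, aa u.card * (if x = pt u then 1 else 0)|
          ≤ ((if x = y then (1:ℝ) else 0) + ∑ u ∈ U, |aa u.card| * (if x = pt u then 1 else 0)) := by
      intro x
      calc |(if x = y then (1:ℝ) else 0) + ∑ u ∈ U, aa u.card * (if x = pt u then 1 else 0)|
          ≤ |if x = y then (1:ℝ) else 0| + |∑ u ∈ U, aa u.card * (if x = pt u then 1 else 0)| :=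
            abs_add_le _ _
        _ ≤ ((if x = y then (1:ℝ) else 0) + ∑ u ∈ U, |aa u.card| * (if x = pt u then 1 else 0)) := by
            apply add_le_add
            · split <;> simp
            · calc |∑ u ∈ U, aa u.card * (if x = pt u then 1 else 0)|
                  ≤ ∑ u ∈ U, |aa u.card * (if x = pt u then 1 else 0)| :=
                    Finset.abs_sum_le_sum_abs _ _
                _ = ∑ u ∈ U, |aa u.card| * (if x = pt u then 1 else 0) := by
                    apply Finset.sum_congr rfl
                    intro u _
                    rw [abs_mul]
                    congr 1
                    split <;> simp
    calc ∑ x : Fin θ × Fin n → Bool,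
          |(if x = y then (1:ℝ) else 0) + ∑ u ∈ U, aa u.card * (if x = pt u then 1 else 0)|
        ≤ ∑ x : Fin θ × Fin n → Bool,
            ((if x = y then (1:ℝ) else 0) + ∑ u ∈ U, |aa u.card| * (if x = pt u then 1 else 0)) :=
          Finset.sum_le_sum (fun x _ => hbound x)
      _ = 1 + ∑ u ∈ U, |aa u.card| * 1 := by
          have := pair_sum y U (fun u => |aa u.card|) pt (fun _ => (1:ℝ))
          simp only [mul_one] at this ⊢
          rw [← this]
      _ ≤ 1 + 2 ^ D * ((n * (θ - 1)).choose D : ℝ) := by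
          apply add_le_add (le_refl _)
          simp only [mul_one]
          have habs : ∀ u ∈ U, |aa u.card| = (((w - u.card - 1).choose (D - u.card) : ℕ) : ℝ) := by
            intro u hu
            rw [haa]
            simp only []
            rw [abs_mul, abs_pow, abs_neg, abs_one, one_pow, one_mul, abs_of_nonneg (by positivity)]
          rw [Finset.sum_congr rfl habs]
          rw [hUdef]
          rw [sum_powerset_filter_card B D (fun s => (((w - s - 1).choose (D - s) : ℕ) : ℝ))]
          calc ∑ t ∈ range (D+1), (B.card.choose t : ℝ) * (((w - t - 1).choose (D - t) : ℕ) : ℝ)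
              ≤ 2^D * (w.choose D : ℝ) := by
                have := norm_id w D (le_of_lt hwD)
                rw [hwdef]
                exact_mod_cast this
            _ ≤ 2 ^ D * ((n * (θ - 1)).choose D : ℝ) := by
                apply mul_le_mul_of_nonneg_left _ (by positivity)
                exact_mod_cast Nat.choose_le_choose D hwm
  · -- vanishing on small blocks
    intro x hxk
    have hxy : x ≠ y := by
      intro heq
      have := hxk ist
      rw [heq] at this
      omega
    rw [if_neg hxy, zero_add]
    apply Finset.sum_eq_zero
    intro u hu
    have hxpt : x ≠ pt u := by
      intro heq
      have := hxk ist
      rw [heq] at this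
      rw [hptblock u] at this
      omega
    rw [if_neg hxpt, mul_zero]
end
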